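/- arXiv:2507.21515 — 4 statements merged into one kernel-verified Lean document; each statement's English description precedes it below -/
import Mathlib

section
/- Let e1, e2 divide q^r−1, E = lcm(e1,e2), e = gcd(e1,e2), and A ⊆ F_{q^r}^*. Then N(E,A) ≥ N(e1,A) + N(e2,A) − N(e,A), where N(d,A) counts the d-free elements of A. -/
/-- γ is `d`-free: γ = β^k with k ∣ d implies k = 1. -/
def IsFreeElt {F : Type*} [Field F] (d : ℕ) (γ : Fˣ) : Prop :=
  ∀ (β : Fˣ) (k : ℕ), k ∣ d → γ = β ^ k → k = 1

/-- The number of `d`-free elements of `A`. -/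
noncomputable def nFree {F : Type*} [Field F] (d : ℕ) (A : Set Fˣ) : ℕ :=
  {γ ∈ A | IsFreeElt d γ}.ncard

lemma isFreeElt_of_dvd {F : Type*} [Field F] {d d' : ℕ} (hd : d' ∣ d) {γ : Fˣ}
    (h : IsFreeElt d γ) : IsFreeElt d' γ :=
  fun β k hk hγ => h β k (hk.trans hd) hγ

lemma isFreeElt_iff_prime {F : Type*} [Field F] (d : ℕ) (γ : Fˣ) :
    IsFreeElt d γ ↔ ∀ p : ℕ, p.Prime → p ∣ d → ∀ β : Fˣ, γ ≠ β ^ p := by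
  constructor
  · intro h p hp hpd β hγ
    exact hp.ne_one (h β p hpd hγ)
  · intro h β k hk hγ
    by_contra hk1
    obtain ⟨p, hp, hpk⟩ := Nat.exists_prime_and_dvd hk1
    refine h p hp (hpk.trans hk) (β ^ (k / p)) ?_
    rw [hγ, ← pow_mul, Nat.div_mul_cancel hpk]

lemma isFreeElt_lcm {F : Type*} [Field F] {d₁ d₂ : ℕ} {γ : Fˣ}
    (h₁ : IsFreeElt d₁ γ) (h₂ : IsFreeElt d₂ γ) : IsFreeElt (Nat.lcm d₁ d₂) γ := by
  rw [isFreeElt_iff_prime] at h₁ h₂ ⊢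
  intro p hp hpd β
  rcases (hp.dvd_mul.mp (hpd.trans (Nat.lcm_dvd_mul d₁ d₂))) with h | h
  · exact h₁ p hp h β
  · exact h₂ p hp h β

theorem stmt_5 (q r : ℕ) (hq : IsPrimePow q) (hr : 1 ≤ r)
    (F : Type*) [Field F] [Fintype F] (hF : Fintype.card F = q ^ r)
    (e₁ e₂ : ℕ) (he₁ : e₁ ∣ q ^ r - 1) (he₂ : e₂ ∣ q ^ r - 1) (A : Set Fˣ) :
    (nFree (Nat.lcm e₁ e₂) A : ℝ) ≥
      (nFree e₁ A : ℝ) + (nFree e₂ A : ℝ) - (nFree (Nat.gcd e₁ e₂) A : ℝ) := by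
  classical
  set S₁ : Set Fˣ := {γ ∈ A | IsFreeElt e₁ γ} with hS₁
  set S₂ : Set Fˣ := {γ ∈ A | IsFreeElt e₂ γ} with hS₂
  set Sg : Set Fˣ := {γ ∈ A | IsFreeElt (Nat.gcd e₁ e₂) γ} with hSg
  have hE : {γ ∈ A | IsFreeElt (Nat.lcm e₁ e₂) γ} = S₁ ∩ S₂ := by
    ext γ
    constructor
    · rintro ⟨hA, h⟩
      exact ⟨⟨hA, isFreeElt_of_dvd (Nat.dvd_lcm_left _ _) h⟩,
        ⟨hA, isFreeElt_of_dvd (Nat.dvd_lcm_right _ _) h⟩⟩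
    · rintro ⟨⟨hA, h1⟩, ⟨_, h2⟩⟩
      exact ⟨hA, isFreeElt_lcm h1 h2⟩
  have hsub : S₁ ∪ S₂ ⊆ Sg := by
    rintro γ (⟨hA, h⟩ | ⟨hA, h⟩)
    · exact ⟨hA, isFreeElt_of_dvd (Nat.gcd_dvd_left _ _) h⟩
    · exact ⟨hA, isFreeElt_of_dvd (Nat.gcd_dvd_right _ _) h⟩
  have hfin : Finite Fˣ := inferInstance
  have key := Set.ncard_union_add_ncard_inter S₁ S₂
  have hle : (S₁ ∪ S₂).ncard ≤ Sg.ncard := Set.ncard_le_ncard hsub (Set.toFinite _)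
  have h1 : nFree (Nat.lcm e₁ e₂) A = (S₁ ∩ S₂).ncard := by
    rw [nFree, hE]
  have h2 : nFree e₁ A = S₁.ncard := rfl
  have h3 : nFree e₂ A = S₂.ncard := rfl
  have h4 : nFree (Nat.gcd e₁ e₂) A = Sg.ncard := rfl
  rw [h1, h2, h3, h4]
  have : ((S₁ ∪ S₂).ncard : ℝ) + (S₁ ∩ S₂).ncard = S₁.ncard + S₂.ncard := by
    exact_mod_cast congrArg Nat.cast key
  have hle' : ((S₁ ∪ S₂).ncard : ℝ) ≤ Sg.ncard := by exact_mod_cast hle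
  linarith
end

section
/- (Modified prime sieve) Suppose rad(q^r−1) = k·p_1···p_{s1}·l_1···l_{s2} with all listed primes distinct and coprime to k. Set δ = 1 − Σ 1/p_i, ε = Σ 1/l_j, ρ(k) = φ(k)/k, W(k) = 2^{ω(k)}. Suppose K bounds |Σ_{γ∈A} χ(γ)| for all nontrivial characters χ of order dividing q^r−1, and δ·ρ(k) > ε. If |A| > [ρ(k)W(k)(s1 + 2δ − 1) + s2 − δρ(k) − ε]/(δρ(k) − ε) · K, then A contains a primitive element of F_{q^r}^*. -/
open Finset
open scoped Classical
set_option linter.unusedSectionVars false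
set_option maxHeartbeats 1000000

section CyclicAux
variable {G : Type*} [CommGroup G] [Fintype G] [IsCyclic G]

lemma aux_pow_iff {t : ℕ} (ht : t ∣ Fintype.card G) (γ : G) :
    (∃ β, β ^ t = γ) ↔ γ ^ (Fintype.card G / t) = 1 := by
  have hn : 0 < Fintype.card G := Fintype.card_pos
  have ht0 : t ≠ 0 := by rintro rfl; rw [Nat.zero_dvd] at ht; omega
  constructor
  · rintro ⟨β, rfl⟩
    rw [← pow_mul, Nat.mul_div_cancel' ht, pow_card_eq_one]
  · intro h
    obtain ⟨g, hg⟩ := IsCyclic.exists_generator (α := G)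
    obtain ⟨a, ha⟩ := mem_powers_iff_mem_zpowers.mpr (hg γ)
    simp only at ha
    have hord : orderOf g = Fintype.card G := by
      rw [orderOf_eq_card_of_forall_mem_zpowers hg, Nat.card_eq_fintype_card]
    have h2 : orderOf g ∣ a * (Fintype.card G / t) := by
      apply orderOf_dvd_of_pow_eq_one
      rw [pow_mul, ha, h]
    rw [hord] at h2
    have hmn : t * (Fintype.card G / t) = Fintype.card G := Nat.mul_div_cancel' ht
    have hne : 0 < Fintype.card G / t := by
      rcases Nat.eq_zero_or_pos (Fintype.card G / t) with h0 | h0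
      · rw [h0, Nat.mul_zero] at hmn; omega
      · exact h0
    obtain ⟨m, hm⟩ : t ∣ a := by
      have h3 : t * (Fintype.card G / t) ∣ a * (Fintype.card G / t) := by
        rw [hmn]; exact h2
      exact (Nat.mul_dvd_mul_iff_right hne).mp h3
    exact ⟨g ^ m, by rw [← pow_mul, mul_comm m t, ← hm, ha]⟩

lemma aux_card_pow [DecidableEq G] {t : ℕ} (ht : t ∣ Fintype.card G) (htpos : 0 < t) :
    #(univ.filter fun x : G => x ^ t = 1) = t := by
  have hn0 : 0 < Fintype.card G := Fintype.card_pos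
  have hmn : t * (Fintype.card G / t) = Fintype.card G := Nat.mul_div_cancel' ht
  have hm0 : 0 < Fintype.card G / t := by
    rcases Nat.eq_zero_or_pos (Fintype.card G / t) with h0 | h0
    · rw [h0, Nat.mul_zero] at hmn; omega
    · exact h0
  have hmdvd : Fintype.card G / t ∣ Fintype.card G := Nat.div_dvd_of_dvd ht
  have himg : (univ.filter fun x : G => x ^ t = 1)
      = univ.image (fun x : G => x ^ (Fintype.card G / t)) := by
    ext γ
    simp only [mem_filter, mem_univ, true_and, mem_image]
    have htt : Fintype.card G / (Fintype.card G / t) = t := Nat.div_div_self ht (by omega)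
    conv_lhs => rw [← htt]
    rw [← aux_pow_iff hmdvd γ]
  refine le_antisymm (IsCyclic.card_pow_eq_one_le htpos) ?_
  have hfib : ∀ b ∈ univ.image (fun x : G => x ^ (Fintype.card G / t)),
      #(univ.filter fun a : G => a ^ (Fintype.card G / t) = b) ≤ Fintype.card G / t := by
    intro b hb
    obtain ⟨x₀, _, hx₀⟩ := mem_image.mp hb
    calc #(univ.filter fun a : G => a ^ (Fintype.card G / t) = b)
        ≤ #(univ.filter fun x : G => x ^ (Fintype.card G / t) = 1) := by
          apply Finset.card_le_card_of_injOn (fun a => a * x₀⁻¹)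
          · intro a ha
            simp only [Finset.mem_coe, mem_filter, mem_univ, true_and] at ha ⊢
            rw [mul_pow, ha, ← hx₀, inv_pow, mul_inv_eq_one]
          · intro a _ b _ h
            exact mul_right_cancel h
      _ ≤ Fintype.card G / t := IsCyclic.card_pow_eq_one_le hm0
  have hle := Finset.card_le_mul_card_image (f := fun x : G => x ^ (Fintype.card G / t))
    univ (Fintype.card G / t) hfib
  rw [Finset.card_univ] at hle
  rw [himg]
  by_contra hlt
  push_neg at hlt
  have : Fintype.card G / t * #(univ.image fun x : G => x ^ (Fintype.card G / t))
      < (Fintype.card G / t) * t := by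
    exact Nat.mul_lt_mul_of_le_of_lt (le_refl _) hlt hm0
  nlinarith [hle, hmn]
end CyclicAux

section CharAux
variable {F : Type*} [Field F] [Fintype F] [DecidableEq F]
  [Fintype (MulChar F ℂ)] [DecidableEq (MulChar F ℂ)]

set_option linter.unusedSectionVars false

lemma aux_enough (F : Type*) [Field F] [Fintype F] :
    HasEnoughRootsOfUnity ℂ (Monoid.exponent Fˣ) := by
  haveI : NeZero ((Monoid.exponent Fˣ : ℕ) : ℂ) :=
    ⟨Nat.cast_ne_zero.mpr Monoid.exponent_ne_zero_of_finite⟩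
  infer_instance

lemma aux_pow_card (χ : MulChar F ℂ) : χ ^ (Fintype.card Fˣ) = 1 := by
  haveI := aux_enough F
  obtain ⟨e⟩ := MulChar.mulEquiv_units F ℂ
  have : e (χ ^ Fintype.card Fˣ) = 1 := by
    rw [map_pow, pow_card_eq_one]
  rwa [← map_one e, e.injective.eq_iff] at this

lemma aux_cardX {t : ℕ} (ht : t ∣ Fintype.card Fˣ) (htpos : 0 < t) :
    #(univ.filter fun χ : MulChar F ℂ => χ ^ t = 1) = t := by
  haveI := aux_enough F
  obtain ⟨e⟩ := MulChar.mulEquiv_units F ℂ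
  have step : #(univ.filter fun χ : MulChar F ℂ => χ ^ t = 1)
      = #(univ.filter fun u : Fˣ => u ^ t = 1) := by
    apply Finset.card_bij (fun χ _ => e χ)
    · intro χ hχ
      simp only [mem_filter, mem_univ, true_and] at hχ ⊢
      rw [← map_pow, hχ, map_one]
    · intro a _ b _ h; exact e.injective h
    · intro u hu
      refine ⟨e.symm u, ?_, by simp⟩
      simp only [mem_filter, mem_univ, true_and] at hu ⊢
      have : e ((e.symm u) ^ t) = 1 := by rw [map_pow, e.apply_symm_apply, hu]
      rwa [← map_one e, e.injective.eq_iff] at this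
  rw [step, aux_card_pow (G := Fˣ) ht htpos]

lemma aux_sep {t : ℕ} (ht : t ∣ Fintype.card Fˣ) (γ : Fˣ)
    (hγ : ¬ ∃ β : Fˣ, β ^ t = γ) :
    ∃ χ : MulChar F ℂ, χ ^ t = 1 ∧ χ (γ : F) ≠ 1 := by
  haveI := aux_enough F
  have hne : γ ^ (Fintype.card Fˣ / t) ≠ 1 := fun h => hγ ((aux_pow_iff ht γ).mpr h)
  have hneF : ((γ ^ (Fintype.card Fˣ / t) : Fˣ) : F) ≠ 1 := by
    intro h; exact hne (Units.ext h)
  obtain ⟨ψ, hψ⟩ := MulChar.exists_apply_ne_one_of_hasEnoughRootsOfUnity F ℂ hneF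
  refine ⟨ψ ^ (Fintype.card Fˣ / t), ?_, ?_⟩
  · rw [← pow_mul, Nat.div_mul_cancel ht, aux_pow_card]
  · rw [MulChar.pow_apply_coe]
    rwa [Units.val_pow_eq_pow_val, map_pow] at hψ

lemma aux_orth {t : ℕ} (ht : t ∣ Fintype.card Fˣ) (htpos : 0 < t) (γ : Fˣ) :
    ∑ χ ∈ univ.filter (fun χ : MulChar F ℂ => χ ^ t = 1), χ (γ : F)
      = if ∃ β : Fˣ, β ^ t = γ then (t : ℂ) else 0 := by
  by_cases hpow : ∃ β : Fˣ, β ^ t = γ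
  · rw [if_pos hpow]
    obtain ⟨β, rfl⟩ := hpow
    have h1 : ∀ χ ∈ univ.filter (fun χ : MulChar F ℂ => χ ^ t = 1), χ ((β ^ t : Fˣ) : F) = 1 := by
      intro χ hχ
      simp only [mem_filter, mem_univ, true_and] at hχ
      rw [Units.val_pow_eq_pow_val, map_pow, ← MulChar.pow_apply_coe, hχ, MulChar.one_apply_coe]
    rw [Finset.sum_congr rfl h1, Finset.sum_const, aux_cardX ht htpos, nsmul_eq_mul, mul_one]
  · rw [if_neg hpow]
    obtain ⟨χ₀, hχ₀t, hχ₀⟩ := aux_sep ht γ hpow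
    have key : χ₀ (γ : F) * ∑ χ ∈ univ.filter (fun χ : MulChar F ℂ => χ ^ t = 1), χ (γ : F)
        = ∑ χ ∈ univ.filter (fun χ : MulChar F ℂ => χ ^ t = 1), χ (γ : F) := by
      rw [Finset.mul_sum]
      apply Finset.sum_nbij' (fun χ => χ₀ * χ) (fun χ => χ₀⁻¹ * χ)
      · intro χ hχ
        simp only [mem_filter, mem_univ, true_and] at hχ ⊢
        rw [mul_pow, hχ, hχ₀t, one_mul]
      · intro χ hχ
        simp only [mem_filter, mem_univ, true_and] at hχ ⊢
        rw [mul_pow, hχ, inv_pow, hχ₀t, inv_one, mul_one]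
      · intro χ _; rw [← mul_assoc, inv_mul_cancel, one_mul]
      · intro χ _; rw [← mul_assoc, mul_inv_cancel, one_mul]
      · intro χ _; rw [MulChar.mul_apply]
    have h2 : (χ₀ (γ : F) - 1) * ∑ χ ∈ univ.filter (fun χ : MulChar F ℂ => χ ^ t = 1), χ (γ : F) = 0 := by
      rw [sub_mul, one_mul, key, sub_self]
    rcases mul_eq_zero.mp h2 with h | h
    · exact absurd (sub_eq_zero.mp h) hχ₀
    · exact h
end CharAux

section Expand
variable {F : Type*} [Field F] [Fintype F] [DecidableEq F]
  [Fintype (MulChar F ℂ)] [DecidableEq (MulChar F ℂ)]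

/-- Evaluation of multiplicative characters at a unit, as a monoid hom. -/
noncomputable def evalChar (γ : Fˣ) : MulChar F ℂ →* ℂ where
  toFun χ := χ ((γ : Fˣ) : F)
  map_one' := MulChar.one_apply_coe γ
  map_mul' χ χ' := MulChar.mul_apply χ χ' _

/-- Number of elements of `B` that are `t`-power-free for all `t ∈ T`. -/
noncomputable def NTc (B : Finset Fˣ) (T : Finset ℕ) : ℕ :=
  #(B.filter fun γ => ∀ t ∈ T, ¬ ∃ β : Fˣ, β ^ t = γ)

/-- The character sum term attached to a subset `S`. -/
noncomputable def ES (B : Finset Fˣ) (S : Finset ℕ) : ℂ :=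
  ∑ f ∈ S.pi (fun t => (univ.filter fun χ : MulChar F ℂ => χ ^ t = 1).erase 1),
    ∑ γ ∈ B, (∏ x ∈ S.attach, f x.1 x.2) ((γ : Fˣ) : F)

/-- `∏_{t ∈ T} (1 - 1/t)`. -/
noncomputable def thetaT (T : Finset ℕ) : ℝ := ∏ t ∈ T, (1 - (t:ℝ)⁻¹)

/-- The coefficient attached to a subset `S ⊆ T`. -/
noncomputable def coefC (T S : Finset ℕ) : ℂ :=
  (∏ t ∈ S, (-(t:ℂ)⁻¹)) * ∏ t ∈ T \ S, (1 - (t:ℂ)⁻¹)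

lemma aux_expand (B : Finset Fˣ) (T : Finset ℕ)
    (hT : ∀ t ∈ T, Nat.Prime t ∧ t ∣ Fintype.card Fˣ) :
    ((NTc B T : ℕ) : ℂ) = ∑ S ∈ T.powerset, coefC T S * ES B S := by
  unfold NTc coefC ES
  have step1 : ((#(B.filter fun γ => ∀ t ∈ T, ¬ ∃ β : Fˣ, β ^ t = γ) : ℕ) : ℂ)
      = ∑ γ ∈ B, ∏ t ∈ T,
          ((-(t:ℂ)⁻¹ * ∑ χ ∈ (univ.filter fun χ : MulChar F ℂ => χ ^ t = 1).erase 1, χ (γ : F))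
            + (1 - (t:ℂ)⁻¹)) := by
    rw [← Finset.sum_boole]
    apply Finset.sum_congr rfl
    intro γ _
    have hfac : ∀ t ∈ T,
        ((-(t:ℂ)⁻¹ * ∑ χ ∈ (univ.filter fun χ : MulChar F ℂ => χ ^ t = 1).erase 1, χ (γ : F))
          + (1 - (t:ℂ)⁻¹))
        = if (¬ ∃ β : Fˣ, β ^ t = γ) then 1 else 0 := by
      intro t htT
      have ht := (hT t htT).2
      have htp := (hT t htT).1
      have h1X : (1 : MulChar F ℂ) ∈ univ.filter (fun χ : MulChar F ℂ => χ ^ t = 1) := by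
        simp [one_pow]
      have hsum : ∑ χ ∈ (univ.filter fun χ : MulChar F ℂ => χ ^ t = 1), χ (γ : F)
          = 1 + ∑ χ ∈ (univ.filter fun χ : MulChar F ℂ => χ ^ t = 1).erase 1, χ (γ : F) := by
        conv_lhs => rw [← Finset.insert_erase h1X]
        rw [Finset.sum_insert (Finset.notMem_erase _ _), MulChar.one_apply_coe]
      have horth := aux_orth ht htp.pos γ
      rw [hsum] at horth
      have ht0 : (t : ℂ) ≠ 0 := Nat.cast_ne_zero.mpr htp.ne_zero
      by_cases hpow : ∃ β : Fˣ, β ^ t = γ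
      · rw [if_pos hpow] at horth
        rw [if_neg (by simpa using hpow)]
        have : ∑ χ ∈ (univ.filter fun χ : MulChar F ℂ => χ ^ t = 1).erase 1, χ (γ : F)
            = (t : ℂ) - 1 := by linear_combination horth
        rw [this]
        field_simp
        ring
      · rw [if_neg hpow] at horth
        rw [if_pos hpow]
        have : ∑ χ ∈ (univ.filter fun χ : MulChar F ℂ => χ ^ t = 1).erase 1, χ (γ : F)
            = -1 := by linear_combination horth
        rw [this]
        ring
    rw [Finset.prod_congr rfl hfac, Finset.prod_boole]
  rw [step1]
  have step2 : ∀ γ ∈ B, ∏ t ∈ T,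
      ((-(t:ℂ)⁻¹ * ∑ χ ∈ (univ.filter fun χ : MulChar F ℂ => χ ^ t = 1).erase 1, χ (γ : F))
        + (1 - (t:ℂ)⁻¹))
      = ∑ S ∈ T.powerset,
          (∏ t ∈ S, (-(t:ℂ)⁻¹ * ∑ χ ∈ (univ.filter fun χ : MulChar F ℂ => χ ^ t = 1).erase 1,
            χ (γ : F))) * ∏ t ∈ T \ S, (1 - (t:ℂ)⁻¹) := by
    intro γ _
    exact Finset.prod_add _ _ T
  rw [Finset.sum_congr rfl step2, Finset.sum_comm]
  apply Finset.sum_congr rfl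
  intro S hS
  have inner : ∀ γ ∈ B,
      (∏ t ∈ S, (-(t:ℂ)⁻¹ * ∑ χ ∈ (univ.filter fun χ : MulChar F ℂ => χ ^ t = 1).erase 1,
        χ (γ : F))) * ∏ t ∈ T \ S, (1 - (t:ℂ)⁻¹)
      = ((∏ t ∈ S, (-(t:ℂ)⁻¹)) * ∏ t ∈ T \ S, (1 - (t:ℂ)⁻¹)) *
          ∑ f ∈ S.pi (fun t => (univ.filter fun χ : MulChar F ℂ => χ ^ t = 1).erase 1),
            (∏ x ∈ S.attach, f x.1 x.2) ((γ : Fˣ) : F) := by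
    intro γ _
    rw [Finset.prod_mul_distrib, Finset.prod_sum]
    have : ∀ p ∈ S.pi (fun t => (univ.filter fun χ : MulChar F ℂ => χ ^ t = 1).erase 1),
        ∏ x ∈ S.attach, (p x.1 x.2) ((γ : Fˣ) : F)
          = (∏ x ∈ S.attach, p x.1 x.2) ((γ : Fˣ) : F) := by
      intro p _
      exact (map_prod (evalChar γ) _ _).symm
    rw [Finset.sum_congr rfl this]
    ring
  rw [Finset.sum_congr rfl inner, ← Finset.mul_sum, Finset.sum_comm]

lemma aux_psi_ne_one (S : Finset ℕ) (hS : ∀ t ∈ S, Nat.Prime t) (hSne : S.Nonempty)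
    (f : (t : ℕ) → t ∈ S → MulChar F ℂ)
    (hf : ∀ (t : ℕ) (h : t ∈ S), f t h ∈ (univ.filter fun χ : MulChar F ℂ => χ ^ t = 1).erase 1) :
    (∏ x ∈ S.attach, f x.1 x.2) ≠ 1 := by
  obtain ⟨t₀, ht₀⟩ := hSne
  have hord : ∀ (t : ℕ) (h : t ∈ S), orderOf (f t h) = t := by
    intro t h
    have hmem := hf t h
    simp only [Finset.mem_erase, Finset.mem_filter, Finset.mem_univ, true_and] at hmem
    haveI : Fact (Nat.Prime t) := ⟨hS t h⟩
    exact orderOf_eq_prime hmem.2 hmem.1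
  set m := ∏ t ∈ S.erase t₀, t with hm
  have hndvd : ¬ t₀ ∣ m := by
    intro hdvd
    obtain ⟨t, htmem, htdvd⟩ := ((hS t₀ ht₀).prime.dvd_finset_prod_iff _).mp hdvd
    have := (Nat.prime_dvd_prime_iff_eq (hS t₀ ht₀) (hS t (Finset.mem_of_mem_erase htmem))).mp htdvd
    exact (Finset.ne_of_mem_erase htmem) this.symm
  intro hone
  have hpow : (∏ x ∈ S.attach, f x.1 x.2) ^ m = 1 := by rw [hone, one_pow]
  rw [← Finset.prod_pow] at hpow
  have hsingle : ∏ x ∈ S.attach, (f x.1 x.2) ^ m = (f t₀ ht₀) ^ m := by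
    apply Finset.prod_eq_single (⟨t₀, ht₀⟩ : {x // x ∈ S})
    · rintro ⟨t, ht⟩ _ hne
      have htne : t ≠ t₀ := by
        intro h; exact hne (Subtype.ext h)
      have : t ∣ m := Finset.dvd_prod_of_mem _ (Finset.mem_erase.mpr ⟨htne, ht⟩)
      rw [← orderOf_dvd_iff_pow_eq_one, hord t ht]
      exact this
    · intro h; exact absurd (Finset.mem_attach _ _) h
  rw [hsingle, ← orderOf_dvd_iff_pow_eq_one, hord t₀ ht₀] at hpow
  exact hndvd hpow

lemma aux_ES_bound (B : Finset Fˣ) (K : ℝ)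
    (hK' : ∀ χ : MulChar F ℂ, χ ≠ 1 → ‖∑ γ ∈ B, χ ((γ : Fˣ) : F)‖ ≤ K)
    (S : Finset ℕ) (hS : ∀ t ∈ S, Nat.Prime t ∧ t ∣ Fintype.card Fˣ) (hSne : S.Nonempty) :
    ‖ES B S‖ ≤ (∏ t ∈ S, ((t:ℝ) - 1)) * K := by
  unfold ES
  have hcard : #(S.pi (fun t => (univ.filter fun χ : MulChar F ℂ => χ ^ t = 1).erase 1))
      = ∏ t ∈ S, (t - 1) := by
    rw [Finset.card_pi]
    apply Finset.prod_congr rfl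
    intro t ht
    rw [Finset.card_erase_of_mem (by simp [one_pow]), aux_cardX (hS t ht).2 (hS t ht).1.pos]
  calc ‖∑ f ∈ S.pi (fun t => (univ.filter fun χ : MulChar F ℂ => χ ^ t = 1).erase 1),
        ∑ γ ∈ B, (∏ x ∈ S.attach, f x.1 x.2) ((γ : Fˣ) : F)‖
      ≤ ∑ f ∈ S.pi (fun t => (univ.filter fun χ : MulChar F ℂ => χ ^ t = 1).erase 1),
        ‖∑ γ ∈ B, (∏ x ∈ S.attach, f x.1 x.2) ((γ : Fˣ) : F)‖ := norm_sum_le _ _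
    _ ≤ ∑ f ∈ S.pi (fun t => (univ.filter fun χ : MulChar F ℂ => χ ^ t = 1).erase 1), K := by
        apply Finset.sum_le_sum
        intro f hf
        apply hK'
        exact aux_psi_ne_one S (fun t ht => (hS t ht).1) hSne f (Finset.mem_pi.mp hf)
    _ = (∏ t ∈ S, ((t:ℝ) - 1)) * K := by
        rw [Finset.sum_const, hcard, nsmul_eq_mul, Nat.cast_prod]
        congr 1
        apply Finset.prod_congr rfl
        intro t ht
        have : 1 ≤ t := (hS t ht).1.one_lt.le
        push_cast [Nat.cast_sub this]
        ring

lemma thetaT_nonneg (T : Finset ℕ) (hT : ∀ t ∈ T, Nat.Prime t) : 0 ≤ thetaT T := by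
  unfold thetaT
  apply Finset.prod_nonneg
  intro t ht
  have h2 : (2:ℝ) ≤ (t:ℝ) := by exact_mod_cast (hT t ht).two_le
  have : (t:ℝ)⁻¹ ≤ 1 := by
    rw [inv_le_one_iff₀]; right; linarith
  linarith

lemma aux_coef_norm (T S : Finset ℕ) (hsub : S ⊆ T) (hT : ∀ t ∈ T, Nat.Prime t) :
    ‖coefC T S‖ * (∏ t ∈ S, ((t:ℝ) - 1)) = thetaT T := by
  unfold coefC thetaT
  rw [norm_mul, norm_prod, norm_prod]
  have h1 : ∀ t ∈ S, ‖-(t:ℂ)⁻¹‖ = (t:ℝ)⁻¹ := by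
    intro t ht
    rw [norm_neg, norm_inv, Complex.norm_natCast]
  have h2 : ∀ t ∈ T \ S, ‖1 - (t:ℂ)⁻¹‖ = 1 - (t:ℝ)⁻¹ := by
    intro t ht
    have htp := hT t (Finset.mem_sdiff.mp ht).1
    have h2t : (2:ℝ) ≤ (t:ℝ) := by exact_mod_cast htp.two_le
    have hcast : (1 : ℂ) - (t:ℂ)⁻¹ = ((1 - (t:ℝ)⁻¹ : ℝ) : ℂ) := by push_cast; ring
    rw [hcast, Complex.norm_real, Real.norm_eq_abs, abs_of_nonneg]
    have : (t:ℝ)⁻¹ ≤ 1 := by rw [inv_le_one_iff₀]; right; linarith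
    linarith
  rw [Finset.prod_congr rfl h1, Finset.prod_congr rfl h2]
  have key : (∏ t ∈ S, (t:ℝ)⁻¹) * (∏ t ∈ S, ((t:ℝ) - 1)) = ∏ t ∈ S, (1 - (t:ℝ)⁻¹) := by
    rw [← Finset.prod_mul_distrib]
    apply Finset.prod_congr rfl
    intro t ht
    have htp := hT t (hsub ht)
    have ht0 : (t:ℝ) ≠ 0 := by exact_mod_cast htp.ne_zero
    field_simp
  calc (∏ t ∈ S, (t:ℝ)⁻¹) * (∏ t ∈ T \ S, (1 - (t:ℝ)⁻¹)) * (∏ t ∈ S, ((t:ℝ) - 1))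
      = ((∏ t ∈ S, (t:ℝ)⁻¹) * (∏ t ∈ S, ((t:ℝ) - 1))) * (∏ t ∈ T \ S, (1 - (t:ℝ)⁻¹)) := by ring
    _ = (∏ t ∈ S, (1 - (t:ℝ)⁻¹)) * (∏ t ∈ T \ S, (1 - (t:ℝ)⁻¹)) := by rw [key]
    _ = ∏ t ∈ T, (1 - (t:ℝ)⁻¹) := by
        rw [mul_comm, Finset.prod_sdiff hsub]

lemma aux_term_bound (B : Finset Fˣ) (K : ℝ)
    (hK' : ∀ χ : MulChar F ℂ, χ ≠ 1 → ‖∑ γ ∈ B, χ ((γ : Fˣ) : F)‖ ≤ K)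
    (T S : Finset ℕ) (hT : ∀ t ∈ T, Nat.Prime t ∧ t ∣ Fintype.card Fˣ)
    (hsub : S ⊆ T) (hSne : S.Nonempty) :
    ‖coefC T S * ES B S‖ ≤ thetaT T * K := by
  rw [norm_mul]
  calc ‖coefC T S‖ * ‖ES B S‖
      ≤ ‖coefC T S‖ * ((∏ t ∈ S, ((t:ℝ) - 1)) * K) := by
        apply mul_le_mul_of_nonneg_left _ (norm_nonneg _)
        exact aux_ES_bound B K hK' S (fun t ht => hT t (hsub ht)) hSne
    _ = (‖coefC T S‖ * (∏ t ∈ S, ((t:ℝ) - 1))) * K := by ring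
    _ = thetaT T * K := by rw [aux_coef_norm T S hsub (fun t ht => (hT t ht).1)]

lemma aux_ES_empty (B : Finset Fˣ) : ES B (∅ : Finset ℕ) = (#B : ℂ) := by
  unfold ES
  have hconst : ∀ f ∈ (∅ : Finset ℕ).pi
      (fun t => (univ.filter fun χ : MulChar F ℂ => χ ^ t = 1).erase 1),
      ∑ γ ∈ B, (∏ x ∈ (∅ : Finset ℕ).attach, f x.1 x.2) ((γ : Fˣ) : F) = (#B : ℂ) := by
    intro f _
    rw [Finset.attach_empty, Finset.prod_empty]
    simp [MulChar.one_apply_coe]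
  rw [Finset.sum_congr rfl hconst, Finset.sum_const, Finset.card_pi]
  simp

end Expand

section RealEst
variable {F : Type*} [Field F] [Fintype F] [DecidableEq F]
  [Fintype (MulChar F ℂ)] [DecidableEq (MulChar F ℂ)]

lemma aux_R1 (B : Finset Fˣ) (K : ℝ)
    (hK' : ∀ χ : MulChar F ℂ, χ ≠ 1 → ‖∑ γ ∈ B, χ ((γ : Fˣ) : F)‖ ≤ K)
    (T : Finset ℕ) (hT : ∀ t ∈ T, Nat.Prime t ∧ t ∣ Fintype.card Fˣ) :
    |((NTc B T : ℕ) : ℝ) - thetaT T * #B| ≤ ((2:ℝ)^#T - 1) * thetaT T * K := by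
  have hcoef0 : coefC T ∅ = ((thetaT T : ℝ) : ℂ) := by
    unfold coefC thetaT
    rw [Finset.prod_empty, one_mul, Finset.sdiff_empty]
    push_cast
    rfl
  have hsplit : ((NTc B T : ℕ) : ℂ) - ((thetaT T * #B : ℝ) : ℂ)
      = ∑ S ∈ T.powerset.erase ∅, coefC T S * ES B S := by
    rw [aux_expand B T hT]
    have hmem : (∅ : Finset ℕ) ∈ T.powerset := Finset.empty_mem_powerset T
    conv_lhs => rw [← Finset.insert_erase hmem]
    rw [Finset.sum_insert (Finset.notMem_erase _ _), hcoef0, aux_ES_empty]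
    push_cast
    ring
  have hnorm : ‖((NTc B T : ℕ) : ℂ) - ((thetaT T * #B : ℝ) : ℂ)‖
      ≤ ((2:ℝ)^#T - 1) * thetaT T * K := by
    rw [hsplit]
    calc ‖∑ S ∈ T.powerset.erase ∅, coefC T S * ES B S‖
        ≤ ∑ S ∈ T.powerset.erase ∅, ‖coefC T S * ES B S‖ := norm_sum_le _ _
      _ ≤ ∑ S ∈ T.powerset.erase ∅, thetaT T * K := by
          apply Finset.sum_le_sum
          intro S hS
          have hsub : S ⊆ T := Finset.mem_powerset.mp (Finset.mem_of_mem_erase hS)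
          have hne : S.Nonempty :=
            Finset.nonempty_iff_ne_empty.mpr (Finset.ne_of_mem_erase hS)
          exact aux_term_bound B K hK' T S hT hsub hne
      _ = ((2:ℝ)^#T - 1) * thetaT T * K := by
          rw [Finset.sum_const, nsmul_eq_mul,
            Finset.card_erase_of_mem (Finset.empty_mem_powerset T), Finset.card_powerset]
          have h1 : (1:ℕ) ≤ 2 ^ #T := Nat.one_le_two_pow
          push_cast [Nat.cast_sub h1]
          ring
  have hre : ((NTc B T : ℕ) : ℂ) - ((thetaT T * #B : ℝ) : ℂ)
      = (((((NTc B T : ℕ) : ℝ)) - thetaT T * #B : ℝ) : ℂ) := by push_cast; ring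
  rw [hre, Complex.norm_real, Real.norm_eq_abs] at hnorm
  exact hnorm

lemma aux_R2 (B : Finset Fˣ) (K : ℝ)
    (hK' : ∀ χ : MulChar F ℂ, χ ≠ 1 → ‖∑ γ ∈ B, χ ((γ : Fˣ) : F)‖ ≤ K)
    (T : Finset ℕ) (hT : ∀ t ∈ T, Nat.Prime t ∧ t ∣ Fintype.card Fˣ)
    (p : ℕ) (hp : Nat.Prime p ∧ p ∣ Fintype.card Fˣ) (hpT : p ∉ T) :
    |((NTc B (insert p T) : ℕ) : ℝ) - (1 - (p:ℝ)⁻¹) * ((NTc B T : ℕ) : ℝ)|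
      ≤ (2:ℝ)^#T * thetaT (insert p T) * K := by
  have hT' : ∀ t ∈ insert p T, Nat.Prime t ∧ t ∣ Fintype.card Fˣ := by
    intro t ht
    rcases Finset.mem_insert.mp ht with h | h
    · exact h ▸ hp
    · exact hT t h
  -- coefficient relation for S ⊆ T
  have hcoef : ∀ S ∈ T.powerset, coefC (insert p T) S = ((1 - (p:ℝ)⁻¹ : ℝ) : ℂ) * coefC T S := by
    intro S hS
    have hsub : S ⊆ T := Finset.mem_powerset.mp hS
    have hpS : p ∉ S := fun h => hpT (hsub h)
    unfold coefC
    have hsd : (insert p T) \ S = insert p (T \ S) := by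
      rw [Finset.insert_sdiff_of_notMem _ hpS]
    rw [hsd, Finset.prod_insert (fun h => hpT (Finset.mem_sdiff.mp h).1)]
    push_cast
    ring
  have hexp := aux_expand B (insert p T) hT'
  rw [Finset.powerset_insert, Finset.sum_union] at hexp
  · -- first part equals (1-1/p) * NTc B T
    have hfirst : ∑ S ∈ T.powerset, coefC (insert p T) S * ES B S
        = ((1 - (p:ℝ)⁻¹ : ℝ) : ℂ) * ((NTc B T : ℕ) : ℂ) := by
      rw [aux_expand B T hT, Finset.mul_sum]
      apply Finset.sum_congr rfl
      intro S hS
      rw [hcoef S hS]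
      ring
    -- second part is bounded
    have hsec : ‖∑ S ∈ T.powerset.image (insert p), coefC (insert p T) S * ES B S‖
        ≤ (2:ℝ)^#T * thetaT (insert p T) * K := by
      calc ‖∑ S ∈ T.powerset.image (insert p), coefC (insert p T) S * ES B S‖
          ≤ ∑ S ∈ T.powerset.image (insert p), ‖coefC (insert p T) S * ES B S‖ :=
            norm_sum_le _ _
        _ ≤ ∑ S ∈ T.powerset.image (insert p), thetaT (insert p T) * K := by
            apply Finset.sum_le_sum
            intro S hS
            obtain ⟨S₀, hS₀, rfl⟩ := Finset.mem_image.mp hS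
            have hsub : insert p S₀ ⊆ insert p T :=
              Finset.insert_subset_insert p (Finset.mem_powerset.mp hS₀)
            exact aux_term_bound B K hK' (insert p T) (insert p S₀) hT' hsub
              (Finset.insert_nonempty _ _)
        _ = (2:ℝ)^#T * (thetaT (insert p T) * K) := by
            rw [Finset.sum_const, nsmul_eq_mul]
            have hinj : Set.InjOn (insert p) (T.powerset : Set (Finset ℕ)) := by
              intro S₁ h₁ S₂ h₂ h
              have hp₁ : p ∉ S₁ := fun hh => hpT (Finset.mem_powerset.mp h₁ hh)
              have hp₂ : p ∉ S₂ := fun hh => hpT (Finset.mem_powerset.mp h₂ hh)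
              rw [← Finset.erase_insert hp₁, ← Finset.erase_insert hp₂, h]
            rw [Finset.card_image_of_injOn hinj, Finset.card_powerset]
            push_cast
            ring
        _ = (2:ℝ)^#T * thetaT (insert p T) * K := by ring
    have hdiff : ((NTc B (insert p T) : ℕ) : ℂ)
        - ((1 - (p:ℝ)⁻¹ : ℝ) : ℂ) * ((NTc B T : ℕ) : ℂ)
        = ∑ S ∈ T.powerset.image (insert p), coefC (insert p T) S * ES B S := by
      rw [hexp, hfirst]; ring
    have hre : ((NTc B (insert p T) : ℕ) : ℂ)
        - ((1 - (p:ℝ)⁻¹ : ℝ) : ℂ) * ((NTc B T : ℕ) : ℂ)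
        = (((((NTc B (insert p T) : ℕ) : ℝ))
            - (1 - (p:ℝ)⁻¹) * ((NTc B T : ℕ) : ℝ) : ℝ) : ℂ) := by push_cast; ring
    rw [hre] at hdiff
    have : ‖((((NTc B (insert p T) : ℕ) : ℝ)
        - (1 - (p:ℝ)⁻¹) * ((NTc B T : ℕ) : ℝ) : ℝ) : ℂ)‖
        ≤ (2:ℝ)^#T * thetaT (insert p T) * K := by rw [hdiff]; exact hsec
    rwa [Complex.norm_real, Real.norm_eq_abs] at this
  · -- disjointness
    rw [Finset.disjoint_left]
    intro S hS hS'
    obtain ⟨S₀, hS₀, rfl⟩ := Finset.mem_image.mp hS'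
    exact hpT (Finset.mem_powerset.mp hS (Finset.mem_insert_self p S₀))
end RealEst

section R3
variable {F : Type*} [Field F] [Fintype F] [DecidableEq F]
  [Fintype (MulChar F ℂ)] [DecidableEq (MulChar F ℂ)]

lemma aux_R3 (B : Finset Fˣ) (K : ℝ)
    (hK' : ∀ χ : MulChar F ℂ, χ ≠ 1 → ‖∑ γ ∈ B, χ ((γ : Fˣ) : F)‖ ≤ K)
    (t : ℕ) (htp : Nat.Prime t) (htd : t ∣ Fintype.card Fˣ) :
    ((#(B.filter fun γ => ∃ β : Fˣ, β ^ t = γ) : ℕ) : ℝ)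
      ≤ (#B : ℝ) / t + (1 - (t:ℝ)⁻¹) * K := by
  have ht0 : (t : ℂ) ≠ 0 := Nat.cast_ne_zero.mpr htp.ne_zero
  have h1X : (1 : MulChar F ℂ) ∈ univ.filter (fun χ : MulChar F ℂ => χ ^ t = 1) := by
    simp [one_pow]
  have hid : ((#(B.filter fun γ => ∃ β : Fˣ, β ^ t = γ) : ℕ) : ℂ)
      = (t:ℂ)⁻¹ * ((#B : ℂ)
        + ∑ χ ∈ (univ.filter fun χ : MulChar F ℂ => χ ^ t = 1).erase 1,
            ∑ γ ∈ B, χ ((γ : Fˣ) : F)) := by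
    rw [← Finset.sum_boole]
    have hpt : ∀ γ ∈ B, (if (∃ β : Fˣ, β ^ t = γ) then (1:ℂ) else 0)
        = (t:ℂ)⁻¹ * ∑ χ ∈ (univ.filter fun χ : MulChar F ℂ => χ ^ t = 1), χ ((γ:Fˣ) : F) := by
      intro γ _
      rw [aux_orth htd htp.pos γ]
      by_cases h : ∃ β : Fˣ, β ^ t = γ
      · rw [if_pos h, if_pos h, inv_mul_cancel₀ ht0]
      · rw [if_neg h, if_neg h, mul_zero]
    rw [Finset.sum_congr rfl hpt, ← Finset.mul_sum, Finset.sum_comm]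
    congr 1
    conv_lhs => rw [← Finset.insert_erase h1X]
    rw [Finset.sum_insert (Finset.notMem_erase _ _)]
    simp [MulChar.one_apply_coe]
  have hbound : ‖∑ χ ∈ (univ.filter fun χ : MulChar F ℂ => χ ^ t = 1).erase 1,
      ∑ γ ∈ B, χ ((γ : Fˣ) : F)‖ ≤ ((t:ℝ) - 1) * K := by
    calc ‖∑ χ ∈ (univ.filter fun χ : MulChar F ℂ => χ ^ t = 1).erase 1,
        ∑ γ ∈ B, χ ((γ : Fˣ) : F)‖
        ≤ ∑ χ ∈ (univ.filter fun χ : MulChar F ℂ => χ ^ t = 1).erase 1,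
          ‖∑ γ ∈ B, χ ((γ : Fˣ) : F)‖ := norm_sum_le _ _
      _ ≤ ∑ χ ∈ (univ.filter fun χ : MulChar F ℂ => χ ^ t = 1).erase 1, K := by
          apply Finset.sum_le_sum
          intro χ hχ
          exact hK' χ (Finset.ne_of_mem_erase hχ)
      _ = ((t:ℝ) - 1) * K := by
          rw [Finset.sum_const, nsmul_eq_mul, Finset.card_erase_of_mem h1X,
            aux_cardX htd htp.pos]
          have : 1 ≤ t := htp.one_lt.le
          push_cast [Nat.cast_sub this]
          ring
  have hdiff : ((#(B.filter fun γ => ∃ β : Fˣ, β ^ t = γ) : ℕ) : ℂ) - (#B : ℂ) / t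
      = (t:ℂ)⁻¹ * ∑ χ ∈ (univ.filter fun χ : MulChar F ℂ => χ ^ t = 1).erase 1,
          ∑ γ ∈ B, χ ((γ : Fˣ) : F) := by
    rw [hid]; field_simp; ring
  have hnorm : ‖((#(B.filter fun γ => ∃ β : Fˣ, β ^ t = γ) : ℕ) : ℂ) - (#B : ℂ) / t‖
      ≤ (1 - (t:ℝ)⁻¹) * K := by
    rw [hdiff, norm_mul, norm_inv, Complex.norm_natCast]
    have htpos : (0:ℝ) < t := by exact_mod_cast htp.pos
    calc ((t:ℝ))⁻¹ * ‖∑ χ ∈ (univ.filter fun χ : MulChar F ℂ => χ ^ t = 1).erase 1,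
          ∑ γ ∈ B, χ ((γ : Fˣ) : F)‖
        ≤ (t:ℝ)⁻¹ * (((t:ℝ) - 1) * K) := by
          apply mul_le_mul_of_nonneg_left hbound (by positivity)
      _ = (1 - (t:ℝ)⁻¹) * K := by field_simp
  have hre : ((#(B.filter fun γ => ∃ β : Fˣ, β ^ t = γ) : ℕ) : ℂ) - (#B : ℂ) / t
      = ((((#(B.filter fun γ => ∃ β : Fˣ, β ^ t = γ) : ℕ) : ℝ) - (#B : ℝ) / t : ℝ) : ℂ) := by
    push_cast; ring
  rw [hre, Complex.norm_real, Real.norm_eq_abs] at hnorm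
  have := abs_le.mp hnorm
  linarith [this.2]
end R3

section Sieve
variable {F : Type*} [Field F] [Fintype F]

lemma aux_sieve (B : Finset Fˣ) (T₀ Tfull : Finset ℕ) {s₁ s₂ : ℕ}
    (p : Fin s₁ → ℕ) (l : Fin s₂ → ℕ)
    (hsub : ∀ t ∈ Tfull, t ∈ T₀ ∨ (∃ i, t = p i) ∨ (∃ j, t = l j)) :
    (∑ i, ((NTc B (insert (p i) T₀) : ℕ) : ℝ))
      - ((s₁ : ℝ) - 1) * ((NTc B T₀ : ℕ) : ℝ)
      - ∑ j, ((#(B.filter fun γ => ∃ β : Fˣ, β ^ (l j) = γ) : ℕ) : ℝ)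
      ≤ ((NTc B Tfull : ℕ) : ℝ) := by
  unfold NTc
  have conv1 : ∀ (T : Finset ℕ), ((#(B.filter fun γ => ∀ t ∈ T, ¬ ∃ β : Fˣ, β ^ t = γ) : ℕ) : ℝ)
      = ∑ γ ∈ B, (if (∀ t ∈ T, ¬ ∃ β : Fˣ, β ^ t = γ) then (1:ℝ) else 0) := by
    intro T; rw [Finset.sum_boole]
  have conv2 : ∀ j, ((#(B.filter fun γ => ∃ β : Fˣ, β ^ (l j) = γ) : ℕ) : ℝ)
      = ∑ γ ∈ B, (if (∃ β : Fˣ, β ^ (l j) = γ) then (1:ℝ) else 0) := by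
    intro j; rw [Finset.sum_boole]
  simp only [conv1, conv2]
  rw [Finset.sum_comm (s := (univ : Finset (Fin s₁))), Finset.sum_comm (s := (univ : Finset (Fin s₂))),
    Finset.mul_sum, ← Finset.sum_sub_distrib, ← Finset.sum_sub_distrib]
  apply Finset.sum_le_sum
  intro γ _
  set Q : ℕ → Prop := fun t => ∃ β : Fˣ, β ^ t = γ with hQ
  have hite01 : ∀ (P : Prop) (inst : Decidable P), (0:ℝ) ≤ @ite ℝ P inst 1 0 := by
    intro P inst; split <;> norm_num
  have hite1 : ∀ (P : Prop) (inst : Decidable P), @ite ℝ P inst 1 0 ≤ 1 := by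
    intro P inst; split <;> norm_num
  have hRHS : (0:ℝ) ≤ (if (∀ t ∈ Tfull, ¬ Q t) then (1:ℝ) else 0) := hite01 _ _
  have hcge : (0:ℝ) ≤ ∑ j, (if Q (l j) then (1:ℝ) else 0) :=
    Finset.sum_nonneg fun j _ => hite01 _ _
  by_cases h0 : ∀ t ∈ T₀, ¬ Q t
  · by_cases hpi : ∃ i, Q (p i)
    · obtain ⟨i₀, hi₀⟩ := hpi
      have hs₁ : 1 ≤ s₁ := i₀.pos
      have hi₀0 : (if (∀ t ∈ insert (p i₀) T₀, ¬ Q t) then (1:ℝ) else 0) = 0 :=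
        if_neg (fun h => h (p i₀) (Finset.mem_insert_self _ _) hi₀)
      have ha : ∑ i, (if (∀ t ∈ insert (p i) T₀, ¬ Q t) then (1:ℝ) else 0) ≤ (s₁ : ℝ) - 1 := by
        rw [← Finset.sum_erase_add _ _ (Finset.mem_univ i₀), hi₀0, add_zero]
        calc ∑ i ∈ univ.erase i₀, (if (∀ t ∈ insert (p i) T₀, ¬ Q t) then (1:ℝ) else 0)
            ≤ ∑ _i ∈ univ.erase i₀, (1:ℝ) := Finset.sum_le_sum (fun i _ => hite1 _ _)
          _ = (s₁ : ℝ) - 1 := by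
              rw [Finset.sum_const, Finset.card_erase_of_mem (Finset.mem_univ i₀),
                Finset.card_univ, Fintype.card_fin, nsmul_eq_mul, mul_one]
              push_cast [Nat.cast_sub hs₁]
              ring
      rw [if_pos h0]
      linarith
    · push_neg at hpi
      have ha : ∑ i, (if (∀ t ∈ insert (p i) T₀, ¬ Q t) then (1:ℝ) else 0) = (s₁ : ℝ) := by
        have h1 : ∀ i ∈ (univ : Finset (Fin s₁)),
            (if (∀ t ∈ insert (p i) T₀, ¬ Q t) then (1:ℝ) else 0) = 1 := by
          intro i _
          apply if_pos
          intro t ht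
          rcases Finset.mem_insert.mp ht with rfl | h
          · exact hpi i
          · exact h0 t h
        rw [Finset.sum_congr rfl h1, Finset.sum_const, Finset.card_univ, Fintype.card_fin,
          nsmul_eq_mul, mul_one]
      by_cases hlj : ∃ j, Q (l j)
      · obtain ⟨j₀, hj₀⟩ := hlj
        have hc1 : (1:ℝ) ≤ ∑ j, (if Q (l j) then (1:ℝ) else 0) := by
          have := Finset.single_le_sum (f := fun j => (if Q (l j) then (1:ℝ) else 0))
            (fun j _ => hite01 _ _) (Finset.mem_univ j₀)
          rwa [if_pos hj₀] at this
        rw [if_pos h0, ha]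
        linarith
      · push_neg at hlj
        have hfull : ∀ t ∈ Tfull, ¬ Q t := by
          intro t ht
          rcases hsub t ht with h | ⟨i, rfl⟩ | ⟨j, rfl⟩
          · exact h0 t h
          · exact hpi i
          · exact hlj j
        have hc0 : ∑ j, (if Q (l j) then (1:ℝ) else 0) = 0 :=
          Finset.sum_eq_zero (fun j _ => if_neg (hlj j))
        rw [if_pos h0, if_pos hfull, ha, hc0]
        ring_nf
        linarith
  · have ha0 : ∑ i, (if (∀ t ∈ insert (p i) T₀, ¬ Q t) then (1:ℝ) else 0) = 0 := by
      apply Finset.sum_eq_zero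
      intro i _
      apply if_neg
      intro hall
      exact h0 (fun t ht => hall t (Finset.mem_insert_of_mem ht))
    rw [ha0, if_neg h0]
    linarith
end Sieve

lemma aux_totient (k : ℕ) (hk : k ≠ 0) :
    (k.totient : ℝ) / k = ∏ t ∈ k.primeFactors, (1 - (t:ℝ)⁻¹) := by
  have hcast : (k.totient : ℝ) * ∏ t ∈ k.primeFactors, (t:ℝ)
      = (k:ℝ) * ∏ t ∈ k.primeFactors, ((t:ℝ) - 1) := by
    have h := Nat.totient_mul_prod_primeFactors k
    calc (k.totient : ℝ) * ∏ t ∈ k.primeFactors, (t:ℝ)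
        = ((k.totient * ∏ t ∈ k.primeFactors, t : ℕ) : ℝ) := by push_cast; ring
      _ = ((k * ∏ t ∈ k.primeFactors, (t - 1) : ℕ) : ℝ) := by rw [h]
      _ = (k:ℝ) * ∏ t ∈ k.primeFactors, ((t:ℝ) - 1) := by
          rw [Nat.cast_mul, Nat.cast_prod]
          congr 1
          apply Finset.prod_congr rfl
          intro t ht
          rw [Nat.cast_sub (Nat.prime_of_mem_primeFactors ht).one_lt.le, Nat.cast_one]
  have hpp : ∀ t ∈ k.primeFactors, (0:ℝ) < (t:ℝ) := by
    intro t ht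
    exact_mod_cast (Nat.prime_of_mem_primeFactors ht).pos
  have hprodpos : (0:ℝ) < ∏ t ∈ k.primeFactors, (t:ℝ) := Finset.prod_pos hpp
  have hkpos : (0:ℝ) < (k:ℝ) := by exact_mod_cast Nat.pos_of_ne_zero hk
  have hfac : ∀ t ∈ k.primeFactors, (1 - (t:ℝ)⁻¹) = ((t:ℝ) - 1) / (t:ℝ) := by
    intro t ht
    have := hpp t ht
    field_simp
  rw [Finset.prod_congr rfl hfac, Finset.prod_div_distrib]
  rw [div_eq_div_iff hkpos.ne' hprodpos.ne']
  linarith [hcast]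

/-- The radical (largest squarefree divisor) of `n`. -/
def radical (n : ℕ) : ℕ := n.primeFactors.prod id

/-- The modified prime sieve. -/
theorem stmt_9 (q r : ℕ) (hq : IsPrimePow q) (hr : 2 ≤ r)
    (F : Type*) [Field F] [Fintype F] (hF : Fintype.card F = q ^ r)
    (s₁ s₂ k : ℕ) (p : Fin s₁ → ℕ) (l : Fin s₂ → ℕ)
    (hp : ∀ i, (p i).Prime) (hl : ∀ j, (l j).Prime)
    (hpinj : Function.Injective p) (hlinj : Function.Injective l)
    (hpl : ∀ i j, p i ≠ l j)
    (hpk : ∀ i, ¬ p i ∣ k) (hlk : ∀ j, ¬ l j ∣ k)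
    (hrad : radical (q ^ r - 1) = k * (∏ i, p i) * ∏ j, l j)
    (A : Set Fˣ) (K : ℝ)
    (hK : ∀ χ : MulChar F ℂ, χ ≠ 1 → orderOf χ ∣ q ^ r - 1 →
      ‖∑ᶠ γ ∈ A, χ (γ : F)‖ ≤ K)
    (δ ε ρk Wk : ℝ)
    (hδ : δ = 1 - ∑ i, 1 / (p i : ℝ)) (hε : ε = ∑ j, 1 / (l j : ℝ))
    (hρk : ρk = (k.totient : ℝ) / (k : ℝ)) (hWk : Wk = 2 ^ k.primeFactors.card)
    (hsieve : δ * ρk > ε)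
    (hA : (A.ncard : ℝ) >
      (ρk * Wk * ((s₁ : ℝ) + 2 * δ - 1) + (s₂ : ℝ) - δ * ρk - ε) / (δ * ρk - ε) * K) :
    ∃ γ ∈ A, Subgroup.zpowers γ = ⊤ := by
  letI : DecidableEq F := Classical.decEq F
  letI : Fintype (MulChar F ℂ) := Fintype.ofFinite _
  letI : DecidableEq (MulChar F ℂ) := Classical.decEq _
  have hn : Fintype.card Fˣ = q ^ r - 1 := by rw [Fintype.card_units, hF]
  have hn0 : Fintype.card Fˣ ≠ 0 := Fintype.card_pos.ne'
  have hAfin : A.Finite := A.toFinite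
  set B : Finset Fˣ := hAfin.toFinset with hB
  have hKB : ∀ χ : MulChar F ℂ, χ ≠ 1 → ‖∑ γ ∈ B, χ ((γ : Fˣ) : F)‖ ≤ K := by
    intro χ hχ
    have hord : orderOf χ ∣ q ^ r - 1 := by
      rw [← hn]
      exact orderOf_dvd_of_pow_eq_one (aux_pow_card χ)
    have h := hK χ hχ hord
    rwa [← hAfin.coe_toFinset, finsum_mem_coe_finset] at h
  have hm : (A.ncard : ℝ) = (#B : ℝ) := by
    rw [Set.ncard_eq_toFinset_card A hAfin]
  -- divisibility facts
  have hraddvd : radical (q ^ r - 1) ∣ q ^ r - 1 := by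
    show (q ^ r - 1).primeFactors.prod id ∣ _
    simpa using Nat.prod_primeFactors_dvd (q ^ r - 1)
  have hkrad : k ∣ radical (q ^ r - 1) := ⟨(∏ i, p i) * ∏ j, l j, by rw [hrad]; ring⟩
  have hkd : k ∣ Fintype.card Fˣ := by rw [hn]; exact hkrad.trans hraddvd
  have hk0 : k ≠ 0 := by
    rintro rfl
    exact hn0 (Nat.eq_zero_of_zero_dvd hkd)
  have hpd : ∀ i, p i ∣ Fintype.card Fˣ := by
    intro i
    rw [hn]
    refine ((Finset.dvd_prod_of_mem p (Finset.mem_univ i)).trans ?_).trans hraddvd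
    exact ⟨k * ∏ j, l j, by rw [hrad]; ring⟩
  have hld : ∀ j, l j ∣ Fintype.card Fˣ := by
    intro j
    rw [hn]
    refine ((Finset.dvd_prod_of_mem l (Finset.mem_univ j)).trans ?_).trans hraddvd
    exact ⟨k * ∏ i, p i, by rw [hrad]; ring⟩
  set T₀ : Finset ℕ := k.primeFactors with hT₀def
  have hT₀good : ∀ t ∈ T₀, Nat.Prime t ∧ t ∣ Fintype.card Fˣ := by
    intro t ht
    exact ⟨Nat.prime_of_mem_primeFactors ht, (Nat.dvd_of_mem_primeFactors ht).trans hkd⟩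
  have hpT₀ : ∀ i, p i ∉ T₀ := fun i h => hpk i (Nat.dvd_of_mem_primeFactors h)
  set Tfull : Finset ℕ := T₀ ∪ Finset.univ.image p ∪ Finset.univ.image l with hTfulldef
  have hmemTfull : ∀ t, Nat.Prime t → t ∣ Fintype.card Fˣ → t ∈ Tfull := by
    intro t htp htd
    rw [hn] at htd
    have htrad : t ∣ radical (q ^ r - 1) := by
      show t ∣ (q ^ r - 1).primeFactors.prod id
      exact Finset.dvd_prod_of_mem id (Nat.mem_primeFactors.mpr ⟨htp, htd, hn ▸ hn0⟩)
    rw [hrad] at htrad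
    rcases (htp.prime.dvd_mul).mp htrad with h1 | h1
    · rcases (htp.prime.dvd_mul).mp h1 with h2 | h2
      · exact Finset.mem_union_left _ (Finset.mem_union_left _
          (Nat.mem_primeFactors.mpr ⟨htp, h2, hk0⟩))
      · obtain ⟨i, _, hdvd⟩ := (htp.prime.dvd_finset_prod_iff p).mp h2
        have : t = p i := (Nat.prime_dvd_prime_iff_eq htp (hp i)).mp hdvd
        exact Finset.mem_union_left _ (Finset.mem_union_right _
          (Finset.mem_image.mpr ⟨i, Finset.mem_univ i, this.symm⟩))
    · obtain ⟨j, _, hdvd⟩ := (htp.prime.dvd_finset_prod_iff l).mp h1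
      have : t = l j := (Nat.prime_dvd_prime_iff_eq htp (hl j)).mp hdvd
      exact Finset.mem_union_right _ (Finset.mem_image.mpr ⟨j, Finset.mem_univ j, this.symm⟩)
  have hsub : ∀ t ∈ Tfull, t ∈ T₀ ∨ (∃ i, t = p i) ∨ (∃ j, t = l j) := by
    intro t ht
    rcases Finset.mem_union.mp ht with h | h
    · rcases Finset.mem_union.mp h with h2 | h2
      · exact Or.inl h2
      · obtain ⟨i, _, rfl⟩ := Finset.mem_image.mp h2
        exact Or.inr (Or.inl ⟨i, rfl⟩)
    · obtain ⟨j, _, rfl⟩ := Finset.mem_image.mp h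
      exact Or.inr (Or.inr ⟨j, rfl⟩)
  -- real estimates
  set θ : ℝ := thetaT T₀ with hθdef
  have hθ : ρk = θ := by
    rw [hρk, aux_totient k hk0]
    rfl
  have hθpos : 0 < θ := by
    rw [hθdef]
    unfold thetaT
    apply Finset.prod_pos
    intro t ht
    have h2 : (2:ℝ) ≤ (t:ℝ) := by exact_mod_cast (hT₀good t ht).1.two_le
    have : (t:ℝ)⁻¹ < 1 := by
      rw [inv_lt_one_iff₀]; right; linarith
    linarith
  have hεnn : 0 ≤ ε := by
    rw [hε]
    apply Finset.sum_nonneg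
    intro j _
    positivity
  have hδpos : 0 < δ := by
    by_contra hc
    push_neg at hc
    have : δ * ρk ≤ 0 := mul_nonpos_of_nonpos_of_nonneg hc (hθ ▸ hθpos.le)
    linarith
  have htheta_insert : ∀ i, thetaT (insert (p i) T₀) = (1 - (p i:ℝ)⁻¹) * θ := by
    intro i
    rw [hθdef]
    unfold thetaT
    rw [Finset.prod_insert (hpT₀ i)]
  have hsum_p : ∑ i, (1 - (p i:ℝ)⁻¹) = (s₁:ℝ) - 1 + δ := by
    rw [Finset.sum_sub_distrib, Finset.sum_const, Finset.card_univ, Fintype.card_fin,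
      nsmul_eq_mul, mul_one]
    simp only [one_div] at hδ
    linarith
  have hsum_l : ∑ j, (l j:ℝ)⁻¹ = ε := by
    simp only [one_div] at hε
    rw [hε]
  set m : ℝ := (#B : ℝ) with hmdef
  set N₀ : ℝ := ((NTc B T₀ : ℕ) : ℝ) with hN₀def
  set ω : ℕ := k.primeFactors.card with hωdef
  have hωT : #T₀ = ω := rfl
  have hW : Wk = (2:ℝ)^ω := hWk
  -- per-i estimate
  have hper : ∀ i, (1 - (p i:ℝ)⁻¹) * N₀ - (2:ℝ)^ω * θ * K * (1 - (p i:ℝ)⁻¹)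
      ≤ ((NTc B (insert (p i) T₀) : ℕ) : ℝ) := by
    intro i
    have h := (abs_le.mp (aux_R2 B K hKB T₀ hT₀good (p i) ⟨hp i, hpd i⟩ (hpT₀ i))).1
    rw [htheta_insert i, hωT] at h
    linarith
  have hc1 : ((s₁:ℝ) - 1 + δ) * N₀ - (2:ℝ)^ω * θ * K * ((s₁:ℝ) - 1 + δ)
      ≤ ∑ i, ((NTc B (insert (p i) T₀) : ℕ) : ℝ) := by
    have := Finset.sum_le_sum (fun i (_ : i ∈ Finset.univ) => hper i)
    calc ((s₁:ℝ) - 1 + δ) * N₀ - (2:ℝ)^ω * θ * K * ((s₁:ℝ) - 1 + δ)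
        = ∑ i, ((1 - (p i:ℝ)⁻¹) * N₀ - (2:ℝ)^ω * θ * K * (1 - (p i:ℝ)⁻¹)) := by
          rw [Finset.sum_sub_distrib, ← Finset.sum_mul, ← Finset.mul_sum, hsum_p]
      _ ≤ _ := this
  have hc2 := aux_sieve B T₀ Tfull p l hsub
  have hc3 : ∑ j, ((#(B.filter fun γ => ∃ β : Fˣ, β ^ (l j) = γ) : ℕ) : ℝ)
      ≤ ε * m + ((s₂:ℝ) - ε) * K := by
    have hperl : ∀ j, ((#(B.filter fun γ => ∃ β : Fˣ, β ^ (l j) = γ) : ℕ) : ℝ)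
        ≤ m * (l j:ℝ)⁻¹ + (1 - (l j:ℝ)⁻¹) * K := by
      intro j
      have h := aux_R3 B K hKB (l j) (hl j) (hld j)
      rw [div_eq_mul_inv] at h
      exact h
    calc ∑ j, ((#(B.filter fun γ => ∃ β : Fˣ, β ^ (l j) = γ) : ℕ) : ℝ)
        ≤ ∑ j, (m * (l j:ℝ)⁻¹ + (1 - (l j:ℝ)⁻¹) * K) :=
          Finset.sum_le_sum (fun j _ => hperl j)
      _ = ε * m + ((s₂:ℝ) - ε) * K := by
          rw [Finset.sum_add_distrib, ← Finset.mul_sum, hsum_l, ← Finset.sum_mul,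
            Finset.sum_sub_distrib, Finset.sum_const, Finset.card_univ, Fintype.card_fin,
            nsmul_eq_mul, mul_one, hsum_l]
          ring
  have hc4 : δ * (θ * m - ((2:ℝ)^ω - 1) * θ * K) ≤ δ * N₀ := by
    apply mul_le_mul_of_nonneg_left _ hδpos.le
    have h := (abs_le.mp (aux_R1 B K hKB T₀ hT₀good)).1
    rw [hωT] at h
    linarith
  have hkey : (θ * (2:ℝ)^ω * ((s₁:ℝ) + 2*δ - 1) + (s₂:ℝ) - δ*θ - ε) * K < (δ*θ - ε) * m := by
    have hpos : 0 < δ * θ - ε := by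
      have h := hsieve
      rw [hθ] at h
      linarith
    rw [hθ, hW] at hA
    rw [gt_iff_lt, div_mul_eq_mul_div, div_lt_iff₀ hpos] at hA
    calc (θ * (2:ℝ)^ω * ((s₁:ℝ) + 2*δ - 1) + (s₂:ℝ) - δ*θ - ε) * K
        = (θ * (2:ℝ)^ω * ((s₁:ℝ) + 2 * δ - 1) + (s₂:ℝ) - δ * θ - ε) * K := by ring
      _ < A.ncard * (δ * θ - ε) := by
          convert hA using 2 <;> ring
      _ = (δ*θ - ε) * m := by rw [hm]; ring
  have hNfpos : (0:ℝ) < ((NTc B Tfull : ℕ) : ℝ) := by nlinarith [hc1, hc2, hc3, hc4, hkey]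
  -- extract the primitive element
  have hNf : 0 < NTc B Tfull := by exact_mod_cast hNfpos
  rw [NTc, Finset.card_pos] at hNf
  obtain ⟨γ, hγ⟩ := hNf
  rw [Finset.mem_filter] at hγ
  obtain ⟨hγB, hγfree⟩ := hγ
  refine ⟨γ, hAfin.mem_toFinset.mp hγB, ?_⟩
  have hord : orderOf γ = Fintype.card Fˣ := by
    by_contra hne
    have hdvd : orderOf γ ∣ Fintype.card Fˣ := orderOf_dvd_card
    obtain ⟨d, hd⟩ := hdvd
    have hd1 : d ≠ 1 := fun h => hne (by rw [h, mul_one] at hd; exact hd.symm)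
    obtain ⟨t, htp, htd⟩ := Nat.exists_prime_and_dvd hd1
    have htn : t ∣ Fintype.card Fˣ := htd.trans ⟨orderOf γ, by rw [hd]; ring⟩
    obtain ⟨e, he⟩ := htd
    have hordpos : 0 < orderOf γ := orderOf_pos γ
    have hpow : γ ^ (Fintype.card Fˣ / t) = 1 := by
      rw [← orderOf_dvd_iff_pow_eq_one]
      have : Fintype.card Fˣ / t = orderOf γ * e := by
        rw [hd, he]
        rw [show orderOf γ * (t * e) = t * (orderOf γ * e) by ring]
        exact Nat.mul_div_cancel_left _ htp.pos
      rw [this]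
      exact Dvd.intro e rfl
    exact (hγfree t (hmemTfull t htp htn)) ((aux_pow_iff htn γ).mpr hpow)
  apply Subgroup.eq_top_of_card_eq
  rw [Nat.card_zpowers, hord, Nat.card_eq_fintype_card]
end

section
/- (Unsieved bound) Suppose K bounds |Σ_{γ∈A} χ(γ)| for all nontrivial multiplicative characters χ of F_{q^r}^* of order dividing q^r−1. If |A| > (W(q^r−1) − 1)·K, where W(n) = 2^{ω(n)}, then A contains a primitive element of F_{q^r}^*. -/
lemma aux_ndvd {n : ℕ} (hn : 0 < n) {T : Finset ℕ} (hT : T ⊆ n.primeFactors)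
    (hTne : T.Nonempty) (k : ∀ p ∈ T, ℕ)
    (hk : ∀ p (hp : p ∈ T), k p hp ∈ Finset.Ico 1 p) :
    ¬ n ∣ ∑ x ∈ T.attach, k x.1 x.2 * (n / x.1) := by
  obtain ⟨p₀, hp₀⟩ := hTne
  have hp₀p : p₀.Prime := Nat.prime_of_mem_primeFactors (hT hp₀)
  have hp₀n : p₀ ∣ n := Nat.dvd_of_mem_primeFactors (hT hp₀)
  set v : ℕ := n.factorization p₀ with hv
  have hv1 : 1 ≤ v := (Nat.Prime.factorization_pos_of_dvd hp₀p hn.ne' hp₀n)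
  set u : ℕ := n / p₀ ^ v with hu
  have hun : p₀ ^ v * u = n := Nat.ordProj_mul_ordCompl_eq_self n p₀
  have hpu : ¬ p₀ ∣ u := Nat.not_dvd_ordCompl hp₀p hn.ne'
  -- split the sum
  have hsplit : ∑ x ∈ T.attach, k x.1 x.2 * (n / x.1)
      = k p₀ hp₀ * (n / p₀) + ∑ x ∈ T.attach.erase ⟨p₀, hp₀⟩, k x.1 x.2 * (n / x.1) := by
    exact (Finset.add_sum_erase _ _ (Finset.mem_attach T ⟨p₀, hp₀⟩)).symm
  have hR : p₀ ^ v ∣ ∑ x ∈ T.attach.erase ⟨p₀, hp₀⟩, k x.1 x.2 * (n / x.1) := by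
    refine Finset.dvd_sum fun x hx => Dvd.dvd.mul_left ?_ _
    have hxT : x.1 ∈ T := x.2
    have hxp : x.1.Prime := Nat.prime_of_mem_primeFactors (hT hxT)
    have hxne : x.1 ≠ p₀ := by
      intro h
      apply Finset.ne_of_mem_erase hx
      exact Subtype.ext h
    have hxdvd : x.1 ∣ n := Nat.dvd_of_mem_primeFactors (hT hxT)
    have hcop : Nat.Coprime (p₀ ^ v) x.1 :=
      Nat.Coprime.pow_left _ (((Nat.coprime_primes hp₀p hxp).mpr (Ne.symm hxne)))
    have : p₀ ^ v ∣ x.1 * (n / x.1) := by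
      rw [Nat.mul_div_cancel' hxdvd]
      exact Nat.ordProj_dvd n p₀
    exact (Nat.Coprime.dvd_of_dvd_mul_left hcop this)
  have hmain : ¬ p₀ ^ v ∣ k p₀ hp₀ * (n / p₀) := by
    have hk0 := hk p₀ hp₀
    rw [Finset.mem_Ico] at hk0
    have hnp : n / p₀ = p₀ ^ (v - 1) * u := by
      have : n = p₀ * (p₀ ^ (v - 1) * u) := by
        rw [← mul_assoc, ← pow_succ', Nat.sub_add_cancel hv1]
        exact hun.symm
      rw [this, Nat.mul_div_cancel_left _ hp₀p.pos]
    rw [hnp]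
    intro hdvd
    have : p₀ ^ (v - 1) * p₀ ∣ p₀ ^ (v - 1) * (k p₀ hp₀ * u) := by
      calc p₀ ^ (v - 1) * p₀ = p₀ ^ v := by
            rw [← pow_succ, Nat.sub_add_cancel hv1]
        _ ∣ k p₀ hp₀ * (p₀ ^ (v - 1) * u) := hdvd
        _ = p₀ ^ (v - 1) * (k p₀ hp₀ * u) := by ring
    have hdk : p₀ ∣ k p₀ hp₀ * u :=
      (mul_dvd_mul_iff_left (a := p₀ ^ (v - 1)) (pow_ne_zero _ hp₀p.pos.ne')).mp this
    rcases hp₀p.dvd_mul.mp hdk with h | h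
    · exact absurd (Nat.le_of_dvd (by omega) h) (by omega)
    · exact hpu h
  intro hdvd
  rw [hsplit] at hdvd
  have h1 : p₀ ^ v ∣ k p₀ hp₀ * (n / p₀) + ∑ x ∈ T.attach.erase ⟨p₀, hp₀⟩, k x.1 x.2 * (n / x.1) :=
    dvd_trans (Nat.ordProj_dvd n p₀) hdvd
  exact hmain ((Nat.dvd_add_right hR).mp (by rwa [add_comm] at h1))

/-- The unsieved bound. -/
theorem stmt_10 (q r : ℕ) (hq : IsPrimePow q) (hr : 1 ≤ r)
    (F : Type*) [Field F] [Fintype F] (hF : Fintype.card F = q ^ r)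
    (A : Set Fˣ) (K : ℝ)
    (hK : ∀ χ : MulChar F ℂ, χ ≠ 1 → orderOf χ ∣ q ^ r - 1 →
      ‖∑ᶠ γ ∈ A, χ (γ : F)‖ ≤ K)
    (hA : (A.ncard : ℝ) > ((2 : ℝ) ^ (q ^ r - 1).primeFactors.card - 1) * K) :
    ∃ γ ∈ A, Subgroup.zpowers γ = ⊤ := by
  by_contra hcon
  push_neg at hcon
  classical
  have hq2 : 2 ≤ q := hq.two_le
  have hqr : 2 ≤ q ^ r := le_trans hq2 (Nat.le_self_pow (by omega) q)
  set n : ℕ := q ^ r - 1 with hn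
  have hn1 : 1 ≤ n := by omega
  have hcard : Fintype.card Fˣ = n := by rw [Fintype.card_units, hF]
  -- a character of maximal order
  haveI : NeZero ((Monoid.exponent Fˣ : ℂ)) :=
    ⟨Nat.cast_ne_zero.mpr (Monoid.exponent_ne_zero_of_finite)⟩
  obtain ⟨e⟩ := MulChar.mulEquiv_units F ℂ
  obtain ⟨g, hg⟩ := IsCyclic.exists_generator (α := Fˣ)
  set ψ : MulChar F ℂ := e.symm g with hψdef
  have hoψ : orderOf ψ = n := by
    rw [hψdef, e.symm.orderOf_eq g, orderOf_eq_card_of_forall_mem_zpowers hg, Nat.card_eq_fintype_card, hcard]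
  have hψpow : ∀ m : ℕ, ψ ^ m = 1 ↔ n ∣ m := by
    intro m
    rw [← hoψ]
    exact (orderOf_dvd_iff_pow_eq_one).symm
  -- the finset
  have hAfin : A.Finite := Set.toFinite A
  set S : Finset Fˣ := hAfin.toFinset with hSdef
  have hAS : A = ↑S := (Set.Finite.coe_toFinset _).symm
  have hcardS : (A.ncard : ℝ) = S.card := by
    rw [hAS, Set.ncard_coe_finset]
  -- character sum bound
  have hKS : ∀ m : ℕ, ¬ n ∣ m → ‖∑ γ ∈ S, ψ ((γ : Fˣ) : F) ^ m‖ ≤ K := by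
    intro m hm
    have hm0 : m ≠ 0 := by rintro rfl; exact hm (dvd_zero n)
    have h1 : (ψ ^ m) ≠ 1 := fun h => hm ((hψpow m).mp h)
    have h2 : orderOf (ψ ^ m) ∣ q ^ r - 1 := by
      apply orderOf_dvd_of_pow_eq_one
      rw [← pow_mul, mul_comm, pow_mul, (hψpow n).mpr dvd_rfl, one_pow]
    have h3 := hK (ψ ^ m) h1 h2
    rw [hAS, finsum_mem_coe_finset] at h3
    simpa only [MulChar.pow_apply' _ hm0] using h3
  -- auxiliary quantities
  set P : Finset ℕ := n.primeFactors with hPdef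
  set c : ℕ → ℂ := fun p => -((p : ℂ) - 1)⁻¹ with hcdef
  set y : ℕ → Fˣ → ℂ := fun p γ => ∑ k ∈ Finset.Ico 1 p, ψ ((γ : Fˣ) : F) ^ (k * (n / p))
    with hydef
  have hcnorm : ∀ p ∈ P, ‖c p‖ = (((p : ℝ)) - 1)⁻¹ := by
    intro p hp
    have hp2 : 2 ≤ p := (Nat.prime_of_mem_primeFactors hp).two_le
    have hp2' : (2 : ℝ) ≤ (p : ℝ) := by exact_mod_cast hp2
    have h1 : ((p : ℂ) - 1) = (((p : ℝ) - 1 : ℝ) : ℂ) := by push_cast; ring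
    show ‖-((p : ℂ) - 1)⁻¹‖ = ((p : ℝ) - 1)⁻¹
    rw [norm_neg, norm_inv, h1, Complex.norm_real, Real.norm_eq_abs,
      abs_of_nonneg (by linarith)]
  -- the main vanishing claim
  have claim1 : ∀ γ ∈ S, ∏ p ∈ P, (c p * y p γ + 1) = 0 := by
    intro γ hγS
    have hγA : γ ∈ A := by rw [hAS]; exact_mod_cast hγS
    have hne : orderOf γ ≠ n := by
      intro h
      apply hcon γ hγA
      apply Subgroup.eq_top_of_card_eq
      rw [Nat.card_zpowers, h, Nat.card_eq_fintype_card, hcard]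
    set d := orderOf γ with hd
    have hdn : d ∣ n := by rw [← hcard]; exact orderOf_dvd_card
    have hd0 : 0 < d := by
      have : 0 < orderOf γ := orderOf_pos γ
      omega
    have hdmul : d * (n / d) = n := Nat.mul_div_cancel' hdn
    have hnd1 : n / d ≠ 1 := by
      intro h
      rw [h, mul_one] at hdmul
      exact hne (hd ▸ hdmul)
    set p := (n / d).minFac with hpdef
    have hp : p.Prime := Nat.minFac_prime hnd1
    have hpnd : p ∣ n / d := Nat.minFac_dvd _
    have hpn : p ∣ n := hpnd.trans (Nat.div_dvd_of_dvd hdn)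
    have hpmem : p ∈ P := Nat.mem_primeFactors.mpr ⟨hp, hpn, by omega⟩
    have hdnp : d ∣ n / p := by
      obtain ⟨t, ht⟩ := hpnd
      have hn' : n = p * (d * t) := by
        rw [← hdmul, ht]; ring
      rw [hn', Nat.mul_div_cancel_left _ hp.pos]
      exact Dvd.intro t rfl
    have hγp : γ ^ (n / p) = 1 := orderOf_dvd_iff_pow_eq_one.mp hdnp
    have hψγ : ψ ((γ : Fˣ) : F) ^ (n / p) = 1 := by
      rw [← map_pow, ← Units.val_pow_eq_pow_val, hγp, Units.val_one, map_one]
    apply Finset.prod_eq_zero hpmem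
    have hyval : y p γ = ((p : ℂ) - 1) := by
      show ∑ k ∈ Finset.Ico 1 p, ψ ((γ : Fˣ) : F) ^ (k * (n / p)) = (p : ℂ) - 1
      have hones : ∀ k ∈ Finset.Ico 1 p, ψ ((γ : Fˣ) : F) ^ (k * (n / p)) = 1 := by
        intro k _
        rw [mul_comm, pow_mul, hψγ, one_pow]
      rw [Finset.sum_congr rfl hones, Finset.sum_const, Nat.card_Ico, nsmul_eq_mul, mul_one]
      have : 1 ≤ p := hp.one_lt.le
      push_cast [this]
      ring
    have hp1 : ((p : ℂ) - 1) ≠ 0 := by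
      have : (p : ℂ) ≠ 1 := by
        intro h
        have : p = 1 := by exact_mod_cast h
        exact hp.one_lt.ne' this
      exact sub_ne_zero.mpr this
    show c p * y p γ + 1 = 0
    rw [hyval]
    show -((p : ℂ) - 1)⁻¹ * ((p : ℂ) - 1) + 1 = 0
    rw [neg_mul, inv_mul_cancel₀ hp1]
    ring
  -- expansion
  have hexp : ∑ γ ∈ S, ∏ p ∈ P, (c p * y p γ + 1)
      = ∑ T ∈ P.powerset, (∏ p ∈ T, c p) *
          ∑ kk ∈ T.pi (fun p => Finset.Ico 1 p),
            ∑ γ ∈ S, ψ ((γ : Fˣ) : F) ^ (∑ x ∈ T.attach, kk x.1 x.2 * (n / x.1)) := by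
    calc ∑ γ ∈ S, ∏ p ∈ P, (c p * y p γ + 1)
        = ∑ γ ∈ S, ∑ T ∈ P.powerset, (∏ p ∈ T, (c p * y p γ)) * ∏ p ∈ P \ T, 1 := by
          refine Finset.sum_congr rfl fun γ _ => ?_
          exact Finset.prod_add _ _ _
      _ = ∑ T ∈ P.powerset, ∑ γ ∈ S, (∏ p ∈ T, c p) * ∏ p ∈ T, y p γ := by
          rw [Finset.sum_comm]
          refine Finset.sum_congr rfl fun T _ => Finset.sum_congr rfl fun γ _ => ?_
          rw [Finset.prod_const_one, mul_one, Finset.prod_mul_distrib]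
      _ = ∑ T ∈ P.powerset, (∏ p ∈ T, c p) * ∑ γ ∈ S, ∏ p ∈ T, y p γ := by
          refine Finset.sum_congr rfl fun T _ => ?_
          rw [Finset.mul_sum]
      _ = ∑ T ∈ P.powerset, (∏ p ∈ T, c p) *
          ∑ kk ∈ T.pi (fun p => Finset.Ico 1 p),
            ∑ γ ∈ S, ψ ((γ : Fˣ) : F) ^ (∑ x ∈ T.attach, kk x.1 x.2 * (n / x.1)) := by
          refine Finset.sum_congr rfl fun T _ => ?_
          congr 1
          calc ∑ γ ∈ S, ∏ p ∈ T, y p γ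
              = ∑ γ ∈ S, ∑ kk ∈ T.pi (fun p => Finset.Ico 1 p),
                  ∏ x ∈ T.attach, ψ ((γ : Fˣ) : F) ^ (kk x.1 x.2 * (n / x.1)) := by
                refine Finset.sum_congr rfl fun γ _ => ?_
                exact Finset.prod_sum _ _ _
            _ = ∑ kk ∈ T.pi (fun p => Finset.Ico 1 p),
                  ∑ γ ∈ S, ψ ((γ : Fˣ) : F) ^ (∑ x ∈ T.attach, kk x.1 x.2 * (n / x.1)) := by
                rw [Finset.sum_comm]
                refine Finset.sum_congr rfl fun kk _ => Finset.sum_congr rfl fun γ _ => ?_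
                exact Finset.prod_pow_eq_pow_sum _ _ _
  -- the empty set term
  have hzero : (0 : ℂ) = ∑ T ∈ P.powerset, (∏ p ∈ T, c p) *
          ∑ kk ∈ T.pi (fun p => Finset.Ico 1 p),
            ∑ γ ∈ S, ψ ((γ : Fˣ) : F) ^ (∑ x ∈ T.attach, kk x.1 x.2 * (n / x.1)) := by
    rw [← hexp, Finset.sum_eq_zero claim1]
  have hempty : (∅ : Finset ℕ) ∈ P.powerset := Finset.empty_mem_powerset P
  rw [← Finset.add_sum_erase _ _ hempty] at hzero
  have hemptyval : (∏ p ∈ (∅ : Finset ℕ), c p) *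
          ∑ kk ∈ (∅ : Finset ℕ).pi (fun p => Finset.Ico 1 p),
            ∑ γ ∈ S, ψ ((γ : Fˣ) : F) ^ (∑ x ∈ (∅ : Finset ℕ).attach, kk x.1 x.2 * (n / x.1))
      = (S.card : ℂ) := by
    simp
  rw [hemptyval] at hzero
  -- bound each nonempty term
  have hbound : ∀ T ∈ P.powerset.erase ∅,
      ‖(∏ p ∈ T, c p) * ∑ kk ∈ T.pi (fun p => Finset.Ico 1 p),
            ∑ γ ∈ S, ψ ((γ : Fˣ) : F) ^ (∑ x ∈ T.attach, kk x.1 x.2 * (n / x.1))‖ ≤ K := by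
    intro T hT
    obtain ⟨hTne', hTP'⟩ := Finset.mem_erase.mp hT
    have hTP : T ⊆ P := Finset.mem_powerset.mp hTP'
    have hTne : T.Nonempty := Finset.nonempty_iff_ne_empty.mpr hTne'
    have hinner : ∀ kk ∈ T.pi (fun p => Finset.Ico 1 p),
        ‖∑ γ ∈ S, ψ ((γ : Fˣ) : F) ^ (∑ x ∈ T.attach, kk x.1 x.2 * (n / x.1))‖ ≤ K := by
      intro kk hkk
      exact hKS _ (aux_ndvd (by omega) hTP hTne kk (fun p hp => (Finset.mem_pi.mp hkk) p hp))
    have hpicard : ((T.pi (fun p => Finset.Ico 1 p)).card : ℝ) = ∏ p ∈ T, ((p : ℝ) - 1) := by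
      rw [Finset.card_pi]
      push_cast
      refine Finset.prod_congr rfl fun p hp => ?_
      rw [Nat.card_Ico]
      have : 1 ≤ p := (Nat.prime_of_mem_primeFactors (hTP hp)).one_lt.le
      push_cast [this]
      ring
    have hpos : ∀ p ∈ T, (0 : ℝ) < (p : ℝ) - 1 := by
      intro p hp
      have h2 : 2 ≤ p := (Nat.prime_of_mem_primeFactors (hTP hp)).two_le
      have : (2 : ℝ) ≤ (p : ℝ) := by exact_mod_cast h2
      linarith
    have hprodpos : (0 : ℝ) < ∏ p ∈ T, ((p : ℝ) - 1) := Finset.prod_pos hpos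
    have h4 : ‖∏ p ∈ T, c p‖ = ∏ p ∈ T, ((p : ℝ) - 1)⁻¹ := by
      rw [norm_prod]
      exact Finset.prod_congr rfl fun p hp => hcnorm p (hTP hp)
    have h5 : ‖∑ kk ∈ T.pi (fun p => Finset.Ico 1 p),
        ∑ γ ∈ S, ψ ((γ : Fˣ) : F) ^ (∑ x ∈ T.attach, kk x.1 x.2 * (n / x.1))‖
        ≤ (∏ p ∈ T, ((p : ℝ) - 1)) * K := by
      calc ‖∑ kk ∈ T.pi (fun p => Finset.Ico 1 p),
          ∑ γ ∈ S, ψ ((γ : Fˣ) : F) ^ (∑ x ∈ T.attach, kk x.1 x.2 * (n / x.1))‖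
          ≤ ∑ kk ∈ T.pi (fun p => Finset.Ico 1 p),
            ‖∑ γ ∈ S, ψ ((γ : Fˣ) : F) ^ (∑ x ∈ T.attach, kk x.1 x.2 * (n / x.1))‖ :=
            norm_sum_le _ _
        _ ≤ ∑ _kk ∈ T.pi (fun p => Finset.Ico 1 p), K := Finset.sum_le_sum hinner
        _ = ((T.pi (fun p => Finset.Ico 1 p)).card : ℝ) * K := by
            rw [Finset.sum_const, nsmul_eq_mul]
        _ = (∏ p ∈ T, ((p : ℝ) - 1)) * K := by rw [hpicard]
    calc ‖(∏ p ∈ T, c p) * ∑ kk ∈ T.pi (fun p => Finset.Ico 1 p),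
            ∑ γ ∈ S, ψ ((γ : Fˣ) : F) ^ (∑ x ∈ T.attach, kk x.1 x.2 * (n / x.1))‖
        = (∏ p ∈ T, ((p : ℝ) - 1)⁻¹) *
          ‖∑ kk ∈ T.pi (fun p => Finset.Ico 1 p),
            ∑ γ ∈ S, ψ ((γ : Fˣ) : F) ^ (∑ x ∈ T.attach, kk x.1 x.2 * (n / x.1))‖ := by
          rw [norm_mul, h4]
      _ ≤ (∏ p ∈ T, ((p : ℝ) - 1)⁻¹) * ((∏ p ∈ T, ((p : ℝ) - 1)) * K) := by
          apply mul_le_mul_of_nonneg_left h5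
          exact Finset.prod_nonneg fun p hp => inv_nonneg.mpr (hpos p hp).le
      _ = K := by
          rw [Finset.prod_inv_distrib, ← mul_assoc, inv_mul_cancel₀ hprodpos.ne', one_mul]
  -- final contradiction
  have hE : (S.card : ℝ) ≤ ((2:ℝ) ^ P.card - 1) * K := by
    have h1 : (S.card : ℝ) = ‖(S.card : ℂ)‖ := by
      simp
    have h2 : (S.card : ℂ) = -(∑ T ∈ P.powerset.erase ∅, (∏ p ∈ T, c p) *
          ∑ kk ∈ T.pi (fun p => Finset.Ico 1 p),
            ∑ γ ∈ S, ψ ((γ : Fˣ) : F) ^ (∑ x ∈ T.attach, kk x.1 x.2 * (n / x.1))) := by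
      exact eq_neg_of_add_eq_zero_left hzero.symm
    have h3 : ((P.powerset.erase ∅).card : ℝ) = (2:ℝ) ^ P.card - 1 := by
      rw [Finset.card_erase_of_mem hempty, Finset.card_powerset]
      have : 1 ≤ 2 ^ P.card := Nat.one_le_two_pow
      push_cast [this]
      ring
    calc (S.card : ℝ) = ‖(S.card : ℂ)‖ := h1
      _ = ‖∑ T ∈ P.powerset.erase ∅, (∏ p ∈ T, c p) *
          ∑ kk ∈ T.pi (fun p => Finset.Ico 1 p),
            ∑ γ ∈ S, ψ ((γ : Fˣ) : F) ^ (∑ x ∈ T.attach, kk x.1 x.2 * (n / x.1))‖ := by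
        rw [h2, norm_neg]
      _ ≤ ∑ T ∈ P.powerset.erase ∅, ‖(∏ p ∈ T, c p) *
          ∑ kk ∈ T.pi (fun p => Finset.Ico 1 p),
            ∑ γ ∈ S, ψ ((γ : Fˣ) : F) ^ (∑ x ∈ T.attach, kk x.1 x.2 * (n / x.1))‖ :=
        norm_sum_le _ _
      _ ≤ ∑ T ∈ P.powerset.erase ∅, K := Finset.sum_le_sum hbound
      _ = ((P.powerset.erase ∅).card : ℝ) * K := by
        rw [Finset.sum_const, nsmul_eq_mul]
      _ = ((2:ℝ) ^ P.card - 1) * K := by rw [h3]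
  rw [hcardS] at hA
  exact absurd (lt_of_le_of_lt hE hA) (lt_irrefl _)
end

section
/- (Prime sieve) Suppose rad(q^r−1) = k·p_1···p_s with distinct primes p_i coprime to k, δ = 1 − Σ_{i=1}^s 1/p_i > 0, and K bounds |Σ_{γ∈A} χ(γ)| for all nontrivial multiplicative characters χ of order dividing q^r−1. If |A| > [W(k)(s + 2δ − 1) − δ]/δ · K, then A contains a primitive element of F_{q^r}^*. -/
open Finset in
lemma aux_geom (z : ℂ) (ℓ : ℕ) (hz : z ^ ℓ = 1) :
    ∑ t ∈ Finset.range ℓ, z ^ t = if z = 1 then (ℓ : ℂ) else 0 := by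
  split_ifs with h
  · subst h; simp
  · have h2 := geom_sum_mul z ℓ
    rw [hz, sub_self] at h2
    rcases mul_eq_zero.mp h2 with h1 | h1
    · exact h1
    · exact absurd (sub_eq_zero.mp h1) h

open Finset in
lemma aux_nt (n : ℕ) (hn : n ≠ 0) (S : Finset ℕ) (hP : ∀ ℓ ∈ S, ℓ.Prime)
    (hD : ∀ ℓ ∈ S, ℓ ∣ n) (τ : ℕ → ℕ) (hlo : ∀ ℓ ∈ S, 1 ≤ τ ℓ) (hhi : ∀ ℓ ∈ S, τ ℓ < ℓ)
    (hne : S.Nonempty) : ¬ n ∣ ∑ ℓ ∈ S, τ ℓ * (n / ℓ) := by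
  have hm : (∏ ℓ ∈ S, ℓ) ∣ n := by
    refine Finset.prod_primes_dvd n (fun ℓ hl => ?_) hD
    exact (hP ℓ hl).prime
  set m := ∏ ℓ ∈ S, ℓ with hmdef
  have hmpos : 0 < m := Finset.prod_pos fun ℓ hl => (hP ℓ hl).pos
  have hc : m * (n / m) = m * (n/m) := rfl
  have hnm : n = m * (n / m) := (Nat.mul_div_cancel' hm).symm
  set c := n / m with hcdef
  have hcpos : 0 < c := by
    rcases Nat.eq_zero_or_pos c with h | h
    · exact absurd (by rw [hnm, h, mul_zero]) hn
    · exact h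
  -- rewrite each n/ℓ
  have hterm : ∀ ℓ ∈ S, n / ℓ = (m / ℓ) * c := by
    intro ℓ hl
    have hlm : ℓ ∣ m := Finset.dvd_prod_of_mem id hl
    have hlpos : 0 < ℓ := (hP ℓ hl).pos
    have : n = ℓ * ((m / ℓ) * c) := by
      rw [← mul_assoc, Nat.mul_div_cancel' hlm, ← hnm]
    rw [this, Nat.mul_div_cancel_left _ hlpos]
  have hsum : ∑ ℓ ∈ S, τ ℓ * (n / ℓ) = (∑ ℓ ∈ S, τ ℓ * (m / ℓ)) * c := by
    rw [Finset.sum_mul]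
    exact Finset.sum_congr rfl fun ℓ hl => by rw [hterm ℓ hl, mul_assoc]
  rw [hsum]
  set w := ∑ ℓ ∈ S, τ ℓ * (m / ℓ) with hwdef
  intro hdvd
  rw [hnm] at hdvd
  have hmw : m ∣ w := by
    have := (Nat.mul_dvd_mul_iff_right hcpos).mp hdvd
    exact this
  obtain ⟨ℓ₀, hℓ₀⟩ := hne
  have hℓ₀p := hP ℓ₀ hℓ₀
  have hl0w : ℓ₀ ∣ w := dvd_trans (Finset.dvd_prod_of_mem id hℓ₀) hmw
  have hwsplit : w = τ ℓ₀ * (m / ℓ₀) + ∑ ℓ ∈ S.erase ℓ₀, τ ℓ * (m / ℓ) := by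
    rw [hwdef, ← Finset.add_sum_erase _ _ hℓ₀]
  have herase : ∀ ℓ ∈ S.erase ℓ₀, ℓ₀ ∣ m / ℓ := by
    intro ℓ hl
    obtain ⟨hne', hlS⟩ := Finset.mem_erase.mp hl
    have hlm : ℓ ∣ m := Finset.dvd_prod_of_mem id hlS
    have : m = ℓ * (m / ℓ) := (Nat.mul_div_cancel' hlm).symm
    have hdl : ℓ₀ ∣ ℓ * (m / ℓ) := this ▸ Finset.dvd_prod_of_mem id hℓ₀
    rcases (Nat.Prime.dvd_mul hℓ₀p).mp hdl with h | h
    · exact absurd ((Nat.prime_dvd_prime_iff_eq hℓ₀p (hP ℓ hlS)).mp h).symm hne'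
    · exact h
  have hrest : ℓ₀ ∣ ∑ ℓ ∈ S.erase ℓ₀, τ ℓ * (m / ℓ) :=
    Finset.dvd_sum fun ℓ hl => Dvd.dvd.mul_left (herase ℓ hl) _
  have hmain : ℓ₀ ∣ τ ℓ₀ * (m / ℓ₀) := by
    have := hl0w
    rw [hwsplit] at this
    exact (Nat.dvd_add_right hrest).mp (by rwa [add_comm] at this)
  rcases (Nat.Prime.dvd_mul hℓ₀p).mp hmain with h | h
  · have := Nat.le_of_dvd (hlo ℓ₀ hℓ₀) h
    exact absurd (hhi ℓ₀ hℓ₀) (not_lt.mpr this)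
  · have hm0 : m = ℓ₀ * (m / ℓ₀) := (Nat.mul_div_cancel' (Finset.dvd_prod_of_mem id hℓ₀)).symm
    have hq : m / ℓ₀ = ∏ ℓ ∈ S.erase ℓ₀, ℓ := by
      have : m = ℓ₀ * ∏ ℓ ∈ S.erase ℓ₀, ℓ := (Finset.mul_prod_erase S id hℓ₀).symm
      rw [this, Nat.mul_div_cancel_left _ hℓ₀p.pos]
    rw [hq] at h
    obtain ⟨ℓ, hlS, hdl⟩ := hℓ₀p.prime.exists_mem_finset_dvd h
    obtain ⟨hne', hlS'⟩ := Finset.mem_erase.mp hlS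
    exact hne' (((Nat.prime_dvd_prime_iff_eq hℓ₀p (hP ℓ hlS')).mp hdl).symm)

lemma aux_est {ι : Type*} (T : Finset ι) (a : ι → ℕ) (n : ℕ) (hn : n ≠ 0)
    (ζ : ℂ) (hζ : orderOf ζ = n) (K : ℝ)
    (hK : ∀ t : ℕ, ¬ n ∣ t → ‖∑ γ ∈ T, ζ ^ (a γ * t)‖ ≤ K) (E : Finset ℕ) :
    (∀ ℓ ∈ E, ℓ.Prime) → (∀ ℓ ∈ E, ℓ ∣ n) →
    ∀ t₀ : ℕ,
    (∀ S : Finset ℕ, S ⊆ E → ∀ τ : ℕ → ℕ, (∀ ℓ ∈ S, 1 ≤ τ ℓ ∧ τ ℓ < ℓ) → S.Nonempty →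
        ¬ n ∣ (t₀ + ∑ ℓ ∈ S, τ ℓ * (n / ℓ))) →
    ‖(∑ γ ∈ T, ζ ^ (a γ * t₀) *
        ∏ ℓ ∈ E, (1 - (ℓ:ℂ)⁻¹ * ∑ t ∈ Finset.range ℓ, ζ ^ (a γ * (t * (n / ℓ))))) -
      (if n ∣ t₀ then (((∏ ℓ ∈ E, (1 - (ℓ:ℝ)⁻¹)) * T.card : ℝ) : ℂ) else 0)‖
    ≤ (∏ ℓ ∈ E, (1 - (ℓ:ℝ)⁻¹)) * ((2:ℝ) ^ E.card - (if n ∣ t₀ then 1 else 0)) * K := by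
  induction E using Finset.induction_on with
  | empty =>
    intro _ _ t₀ hAdm
    simp only [Finset.prod_empty, mul_one, Finset.card_empty, pow_zero]
    by_cases h : n ∣ t₀
    · simp only [h, if_true]
      have : ∀ γ ∈ T, ζ ^ (a γ * t₀) = 1 := by
        intro γ _
        exact orderOf_dvd_iff_pow_eq_one.mp (hζ ▸ Dvd.dvd.mul_left h (a γ))
      rw [Finset.sum_congr rfl this]
      simp
    · simp only [h, if_false]
      have := hK t₀ h
      simpa using this
  | @insert ℓ E hℓE ih =>
    intro hPr hDv t₀ hAdm
    have hℓp : ℓ.Prime := hPr ℓ (Finset.mem_insert_self ℓ E)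
    have hℓn : ℓ ∣ n := hDv ℓ (Finset.mem_insert_self ℓ E)
    have hPr' : ∀ x ∈ E, x.Prime := fun x hx => hPr x (Finset.mem_insert_of_mem hx)
    have hDv' : ∀ x ∈ E, x ∣ n := fun x hx => hDv x (Finset.mem_insert_of_mem hx)
    -- notation
    set θE : ℝ := ∏ x ∈ E, (1 - (x:ℝ)⁻¹) with hθE
    set Φ : ℕ → ℂ := fun t₀ => ∑ γ ∈ T, ζ ^ (a γ * t₀) *
        ∏ x ∈ E, (1 - (x:ℂ)⁻¹ * ∑ t ∈ Finset.range x, ζ ^ (a γ * (t * (n / x)))) with hΦ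
    have hθEnn : 0 ≤ θE := by
      rw [hθE]
      refine Finset.prod_nonneg fun x hx => ?_
      have h2 : (2:ℝ) ≤ (x:ℝ) := by exact_mod_cast (hPr' x hx).two_le
      have : (x:ℝ)⁻¹ ≤ 1 := by
        rw [inv_le_one_iff₀]; right; linarith
      linarith
    have hθℓnn : (0:ℝ) ≤ 1 - (ℓ:ℝ)⁻¹ := by
      have h2 : (2:ℝ) ≤ (ℓ:ℝ) := by exact_mod_cast hℓp.two_le
      have : (ℓ:ℝ)⁻¹ ≤ 1 := by rw [inv_le_one_iff₀]; right; linarith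
      linarith
    -- Adm facts
    have hAdmE : ∀ S : Finset ℕ, S ⊆ E → ∀ τ : ℕ → ℕ,
        (∀ x ∈ S, 1 ≤ τ x ∧ τ x < x) → S.Nonempty → ¬ n ∣ (t₀ + ∑ x ∈ S, τ x * (n / x)) :=
      fun S hS τ hτ hne => hAdm S (hS.trans (Finset.subset_insert ℓ E)) τ hτ hne
    have hAdmStep : ∀ t : ℕ, 1 ≤ t → t < ℓ →
        (∀ S : Finset ℕ, S ⊆ E → ∀ τ : ℕ → ℕ, (∀ x ∈ S, 1 ≤ τ x ∧ τ x < x) → S.Nonempty →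
          ¬ n ∣ ((t₀ + t * (n / ℓ)) + ∑ x ∈ S, τ x * (n / x))) ∧
        ¬ n ∣ (t₀ + t * (n / ℓ)) := by
      intro t ht1 ht2
      constructor
      · intro S hSE τ hτ _
        have hℓS : ℓ ∉ S := fun h => hℓE (hSE h)
        have := hAdm (insert ℓ S) (Finset.insert_subset_insert ℓ hSE)
          (fun x => if x = ℓ then t else τ x) ?_ ⟨ℓ, Finset.mem_insert_self ℓ S⟩
        · intro hcon
          apply this
          rw [Finset.sum_insert hℓS]
          simp only [if_pos rfl]
          have : ∑ x ∈ S, (if x = ℓ then t else τ x) * (n / x) = ∑ x ∈ S, τ x * (n / x) := by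
            refine Finset.sum_congr rfl fun x hx => ?_
            rw [if_neg (show ¬ x = ℓ from fun h => hℓS (h ▸ hx))]
          rw [this, ← add_assoc]
          exact hcon
        · intro x hx
          rcases Finset.mem_insert.mp hx with h | h
          · subst h; simp only [if_pos rfl]; exact ⟨ht1, ht2⟩
          · have hxℓ : ¬ x = ℓ := fun hc => hℓS (hc ▸ h)
            simp only [if_neg hxℓ]
            exact hτ x h
      · have := hAdm {ℓ} (by simp) (fun _ => t) (by simp [ht1, ht2]) ⟨ℓ, by simp⟩
        simpa using this
    -- decompose the inner factor for ℓ
    have hdecomp : ∀ γ : ι,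
        (1 - (ℓ:ℂ)⁻¹ * ∑ t ∈ Finset.range ℓ, ζ ^ (a γ * (t * (n / ℓ))))
        = (1 - (ℓ:ℂ)⁻¹) - (ℓ:ℂ)⁻¹ * ∑ t ∈ Finset.Ico 1 ℓ, ζ ^ (a γ * (t * (n / ℓ))) := by
      intro γ
      have hsplit : ∑ t ∈ Finset.range ℓ, ζ ^ (a γ * (t * (n / ℓ)))
          = 1 + ∑ t ∈ Finset.Ico 1 ℓ, ζ ^ (a γ * (t * (n / ℓ))) := by
        rw [Finset.range_eq_Ico, Finset.sum_eq_sum_Ico_succ_bot hℓp.pos]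
        simp
      rw [hsplit]; ring
    -- key recursion identity
    have hpow : ∀ γ (t : ℕ), ζ ^ (a γ * (t₀ + t * (n / ℓ)))
        = ζ ^ (a γ * t₀) * ζ ^ (a γ * (t * (n / ℓ))) := by
      intro γ t; rw [Nat.mul_add, pow_add]
    have hkey : (∑ γ ∈ T, ζ ^ (a γ * t₀) *
          ∏ x ∈ insert ℓ E, (1 - (x:ℂ)⁻¹ * ∑ t ∈ Finset.range x, ζ ^ (a γ * (t * (n / x)))))
        = (1 - (ℓ:ℂ)⁻¹) * Φ t₀
          - (ℓ:ℂ)⁻¹ * ∑ t ∈ Finset.Ico 1 ℓ, Φ (t₀ + t * (n / ℓ)) := by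
      have hper : ∀ γ ∈ T, ζ ^ (a γ * t₀) *
            ∏ x ∈ insert ℓ E, (1 - (x:ℂ)⁻¹ * ∑ t ∈ Finset.range x, ζ ^ (a γ * (t * (n / x))))
          = (1 - (ℓ:ℂ)⁻¹) * (ζ ^ (a γ * t₀) *
              ∏ x ∈ E, (1 - (x:ℂ)⁻¹ * ∑ t ∈ Finset.range x, ζ ^ (a γ * (t * (n / x)))))
            - (ℓ:ℂ)⁻¹ * ∑ t ∈ Finset.Ico 1 ℓ, (ζ ^ (a γ * (t₀ + t * (n / ℓ))) *
              ∏ x ∈ E, (1 - (x:ℂ)⁻¹ * ∑ t ∈ Finset.range x, ζ ^ (a γ * (t * (n / x))))) := by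
        intro γ _
        rw [Finset.prod_insert hℓE, hdecomp γ]
        have h1 : ∑ t ∈ Finset.Ico 1 ℓ, (ζ ^ (a γ * (t₀ + t * (n / ℓ))) *
              ∏ x ∈ E, (1 - (x:ℂ)⁻¹ * ∑ t ∈ Finset.range x, ζ ^ (a γ * (t * (n / x)))))
            = (∑ t ∈ Finset.Ico 1 ℓ, ζ ^ (a γ * (t * (n / ℓ)))) * (ζ ^ (a γ * t₀) *
              ∏ x ∈ E, (1 - (x:ℂ)⁻¹ * ∑ t ∈ Finset.range x, ζ ^ (a γ * (t * (n / x))))) := by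
          rw [Finset.sum_mul]
          exact Finset.sum_congr rfl fun t _ => by rw [hpow γ t]; ring
        rw [h1]; ring
      rw [Finset.sum_congr rfl hper, Finset.sum_sub_distrib, ← Finset.mul_sum, ← Finset.mul_sum,
        Finset.sum_comm]
    rw [hkey]
    -- main-term bookkeeping
    have hθins : ∏ x ∈ insert ℓ E, (1 - (x:ℝ)⁻¹) = (1 - (ℓ:ℝ)⁻¹) * θE :=
      Finset.prod_insert hℓE
    have hMsplit : (if n ∣ t₀ then (((∏ x ∈ insert ℓ E, (1 - (x:ℝ)⁻¹)) * T.card : ℝ) : ℂ) else 0)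
        = (1 - (ℓ:ℂ)⁻¹) * (if n ∣ t₀ then ((θE * T.card : ℝ) : ℂ) else 0) := by
      split_ifs with h
      · rw [hθins]; push_cast; ring
      · rw [mul_zero]
    rw [hMsplit]
    have hIH1 := ih hPr' hDv' t₀ hAdmE
    have hIH2 : ∀ t ∈ Finset.Ico 1 ℓ, ‖Φ (t₀ + t * (n / ℓ))‖ ≤ θE * (2:ℝ) ^ E.card * K := by
      intro t ht
      obtain ⟨ht1, ht2⟩ := Finset.mem_Ico.mp ht
      obtain ⟨hadm, hnd⟩ := hAdmStep t ht1 ht2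
      have := ih hPr' hDv' (t₀ + t * (n / ℓ)) hadm
      rw [if_neg hnd, if_neg hnd, sub_zero, sub_zero] at this
      exact this
    -- put the difference in a good shape
    have hcast1 : (1 - (ℓ:ℂ)⁻¹) = ((1 - (ℓ:ℝ)⁻¹ : ℝ) : ℂ) := by push_cast; ring
    have hcast2 : ((ℓ:ℂ)⁻¹) = (((ℓ:ℝ)⁻¹ : ℝ) : ℂ) := by push_cast; ring
    have hshape : (1 - (ℓ:ℂ)⁻¹) * Φ t₀
          - (ℓ:ℂ)⁻¹ * ∑ t ∈ Finset.Ico 1 ℓ, Φ (t₀ + t * (n / ℓ))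
          - (1 - (ℓ:ℂ)⁻¹) * (if n ∣ t₀ then ((θE * T.card : ℝ) : ℂ) else 0)
        = (1 - (ℓ:ℂ)⁻¹) * (Φ t₀ - (if n ∣ t₀ then ((θE * T.card : ℝ) : ℂ) else 0))
          - (ℓ:ℂ)⁻¹ * ∑ t ∈ Finset.Ico 1 ℓ, Φ (t₀ + t * (n / ℓ)) := by ring
    rw [hshape]
    have hℓinv_nn : (0:ℝ) ≤ (ℓ:ℝ)⁻¹ := by positivity
    have hbound : ‖(1 - (ℓ:ℂ)⁻¹) * (Φ t₀ - (if n ∣ t₀ then ((θE * T.card : ℝ) : ℂ) else 0))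
          - (ℓ:ℂ)⁻¹ * ∑ t ∈ Finset.Ico 1 ℓ, Φ (t₀ + t * (n / ℓ))‖
        ≤ (1 - (ℓ:ℝ)⁻¹) * (θE * ((2:ℝ) ^ E.card - (if n ∣ t₀ then 1 else 0)) * K)
          + (ℓ:ℝ)⁻¹ * (((ℓ:ℝ) - 1) * (θE * (2:ℝ) ^ E.card * K)) := by
      refine (norm_sub_le _ _).trans ?_
      gcongr
      · rw [hcast1, norm_mul, Complex.norm_real, Real.norm_of_nonneg hθℓnn]
        exact mul_le_mul_of_nonneg_left hIH1 hθℓnn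
      · rw [hcast2, norm_mul, Complex.norm_real, Real.norm_of_nonneg hℓinv_nn]
        refine mul_le_mul_of_nonneg_left ?_ hℓinv_nn
        refine (norm_sum_le _ _).trans ?_
        have := Finset.sum_le_sum hIH2
        rw [Finset.sum_const, Nat.card_Ico] at this
        refine this.trans ?_
        rw [nsmul_eq_mul]
        have : ((ℓ - 1 : ℕ) : ℝ) = (ℓ:ℝ) - 1 := by
          have := hℓp.one_lt
          push_cast [Nat.cast_sub hℓp.one_lt.le]
          ring
        rw [this]
    refine hbound.trans ?_
    rw [hθins, Finset.card_insert_of_notMem hℓE]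
    have hℓne : (ℓ:ℝ) ≠ 0 := by exact_mod_cast hℓp.pos.ne'
    have harith : (ℓ:ℝ)⁻¹ * ((ℓ:ℝ) - 1) = 1 - (ℓ:ℝ)⁻¹ := by field_simp
    calc (1 - (ℓ:ℝ)⁻¹) * (θE * ((2:ℝ) ^ E.card - (if n ∣ t₀ then 1 else 0)) * K)
          + (ℓ:ℝ)⁻¹ * (((ℓ:ℝ) - 1) * (θE * (2:ℝ) ^ E.card * K))
        = (1 - (ℓ:ℝ)⁻¹) * (θE * ((2:ℝ) ^ E.card - (if n ∣ t₀ then 1 else 0)) * K)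
          + ((ℓ:ℝ)⁻¹ * ((ℓ:ℝ) - 1)) * (θE * (2:ℝ) ^ E.card * K) := by ring
      _ = (1 - (ℓ:ℝ)⁻¹) * θE * ((2:ℝ) ^ (E.card + 1) - (if n ∣ t₀ then 1 else 0)) * K := by
          rw [harith]; ring
      _ ≤ (1 - (ℓ:ℝ)⁻¹) * θE * ((2:ℝ) ^ (E.card + 1) - (if n ∣ t₀ then 1 else 0)) * K := le_rfl


set_option maxHeartbeats 2000000 in
/-- The prime sieve. -/
theorem stmt_11 (q r : ℕ) (hq : IsPrimePow q) (hr : 2 ≤ r)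
    (F : Type*) [Field F] [Fintype F] (hF : Fintype.card F = q ^ r)
    (s k : ℕ) (p : Fin s → ℕ)
    (hp : ∀ i, (p i).Prime) (hinj : Function.Injective p)
    (hpk : ∀ i, ¬ p i ∣ k)
    (hrad : radical (q ^ r - 1) = k * ∏ i, p i)
    (A : Set Fˣ) (K : ℝ)
    (hK : ∀ χ : MulChar F ℂ, χ ≠ 1 → orderOf χ ∣ q ^ r - 1 →
      ‖∑ᶠ γ ∈ A, χ (γ : F)‖ ≤ K)
    (δ : ℝ) (hδ : δ = 1 - ∑ i, 1 / (p i : ℝ)) (hδpos : δ > 0)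
    (hA : (A.ncard : ℝ) >
      ((2 : ℝ) ^ k.primeFactors.card * ((s : ℝ) + 2 * δ - 1) - δ) / δ * K) :
    ∃ γ ∈ A, Subgroup.zpowers γ = ⊤ := by
  classical
  have hq2 : 2 ≤ q := hq.two_le
  have hq4 : 4 ≤ q ^ r := by
    calc (4:ℕ) = 2 ^ 2 := rfl
    _ ≤ q ^ 2 := Nat.pow_le_pow_left hq2 2
    _ ≤ q ^ r := Nat.pow_le_pow_right (by omega) hr
  set n := q ^ r - 1 with hndef
  have hn3 : 3 ≤ n := by omega
  have hn0 : n ≠ 0 := by omega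
  have hcardF : Fintype.card Fˣ = n := by rw [Fintype.card_units, hF]
  obtain ⟨g, hg⟩ := IsCyclic.exists_generator (α := Fˣ)
  have hog : orderOf g = n := by rw [orderOf_eq_card_of_forall_mem_zpowers hg, Nat.card_eq_fintype_card, hcardF]
  have hex : ∀ γ : Fˣ, ∃ m : ℕ, g ^ m = γ := by
    intro γ
    have := (mem_powers_iff_mem_zpowers (x := g) (y := γ)).mpr (hg γ)
    obtain ⟨m, hm⟩ := this
    exact ⟨m, hm⟩
  choose a ha using hex
  haveI : NeZero ((Monoid.exponent Fˣ : ℂ)) :=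
    ⟨Nat.cast_ne_zero.mpr Monoid.exponent_ne_zero_of_finite⟩
  obtain ⟨e⟩ := MulChar.mulEquiv_units F ℂ
  set χ : MulChar F ℂ := e.symm g with hχdef
  have hoχ : orderOf χ = n := by
    rw [← hog]
    exact orderOf_injective e.symm.toMonoidHom e.symm.injective g
  set ζ : ℂ := χ (g : F) with hζdef
  have hζpow : ∀ x : Fˣ, χ (x : F) = ζ ^ (a x) := by
    intro x
    conv_lhs => rw [← ha x]
    rw [Units.val_pow_eq_pow_val, map_pow]
  have hζn : ζ ^ n = 1 := by
    rw [hζdef, ← map_pow, ← Units.val_pow_eq_pow_val, ← hog, pow_orderOf_eq_one g,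
      Units.val_one, map_one]
  have hoζ : orderOf ζ = n := by
    have h1 : orderOf ζ ∣ n := orderOf_dvd_of_pow_eq_one hζn
    have h2 : χ ^ (orderOf ζ) = 1 := by
      apply MulChar.ext; intro u
      rw [MulChar.pow_apply_coe, MulChar.one_apply_coe, hζpow u, ← pow_mul, mul_comm, pow_mul,
        pow_orderOf_eq_one, one_pow]
    have h3 : n ∣ orderOf ζ := hoχ ▸ orderOf_dvd_of_pow_eq_one h2
    exact Nat.dvd_antisymm h1 h3
  set T : Finset Fˣ := A.toFinset with hTdef
  have hTA : (↑T : Set Fˣ) = A := Set.coe_toFinset A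
  have hTcard : A.ncard = T.card := Set.ncard_eq_toFinset_card' A
  have hK' : ∀ t : ℕ, ¬ n ∣ t → ‖∑ γ ∈ T, ζ ^ (a γ * t)‖ ≤ K := by
    intro t hnd
    have hne : χ ^ t ≠ 1 := by
      intro hcon
      have h1 : (χ ^ t) ((g : Fˣ) : F) = 1 := by rw [hcon, MulChar.one_apply_coe]
      rw [MulChar.pow_apply_coe] at h1
      exact hnd (hoζ ▸ orderOf_dvd_of_pow_eq_one h1)
    have hdvd : orderOf (χ ^ t) ∣ q ^ r - 1 := (orderOf_pow_dvd t).trans (hoχ ▸ dvd_refl (orderOf χ))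
    have hKt := hK (χ ^ t) hne hdvd
    rw [← hTA, finsum_mem_coe_finset] at hKt
    have heq : ∀ γ ∈ T, (χ ^ t) ((γ : Fˣ) : F) = ζ ^ (a γ * t) := by
      intro γ _
      rw [MulChar.pow_apply_coe, hζpow, ← pow_mul]
    rw [Finset.sum_congr rfl heq] at hKt
    exact hKt
  -- number theory facts
  set P := k.primeFactors with hPdef
  have hradpos : 0 < radical n := by
    refine Finset.prod_pos fun ℓ hl => (Nat.prime_of_mem_primeFactors hl).pos
  have hk0 : k ≠ 0 := by
    intro h
    rw [hrad, h, zero_mul] at hradpos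
    exact lt_irrefl 0 hradpos
  have hradn : radical n ∣ n := Nat.prod_primeFactors_dvd n
  have hPp : ∀ ℓ ∈ P, ℓ.Prime := fun ℓ hl => Nat.prime_of_mem_primeFactors hl
  have hPd : ∀ ℓ ∈ P, ℓ ∣ n := by
    intro ℓ hl
    have h1 : ℓ ∣ k := Nat.dvd_of_mem_primeFactors hl
    exact (h1.trans (dvd_mul_right k _)).trans (hrad ▸ hradn)
  have hpd : ∀ i, p i ∣ n := by
    intro i
    have h1 : p i ∣ ∏ j, p j := Finset.dvd_prod_of_mem p (Finset.mem_univ i)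
    exact (h1.trans (dvd_mul_left _ k)).trans (hrad ▸ hradn)
  have hpnotP : ∀ i, p i ∉ P := fun i hi => hpk i (Nat.dvd_of_mem_primeFactors hi)
  -- power characterization
  have hpow_iff : ∀ (γ : Fˣ) (ℓ : ℕ), ℓ.Prime → ℓ ∣ n →
      ((∃ β : Fˣ, β ^ ℓ = γ) ↔ ℓ ∣ a γ) := by
    intro γ ℓ hlp hln
    constructor
    · rintro ⟨β, hβ⟩
      have h1 : g ^ (a β * ℓ) = g ^ (a γ) := by
        rw [pow_mul, ha β, hβ, ha γ]
      have h2 : a β * ℓ ≡ a γ [MOD n] := by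
        have := pow_eq_pow_iff_modEq.mp h1
        rwa [hog] at this
      have h3 : a β * ℓ ≡ a γ [MOD ℓ] := h2.of_dvd hln
      have h4 : a γ ≡ 0 [MOD ℓ] := by
        calc a γ ≡ a β * ℓ [MOD ℓ] := h3.symm
        _ ≡ 0 [MOD ℓ] := (Nat.modEq_zero_iff_dvd).mpr (dvd_mul_left ℓ (a β))
      exact (Nat.modEq_zero_iff_dvd).mp h4
    · intro hdl
      exact ⟨g ^ (a γ / ℓ), by rw [← pow_mul, Nat.div_mul_cancel hdl, ha γ]⟩
  -- indicator identity
  have hind : ∀ (γ : Fˣ) (ℓ : ℕ), ℓ.Prime → ℓ ∣ n →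
      (1 - (ℓ:ℂ)⁻¹ * ∑ t ∈ Finset.range ℓ, ζ ^ (a γ * (t * (n / ℓ))))
      = if (∀ β : Fˣ, β ^ ℓ ≠ γ) then 1 else 0 := by
    intro γ ℓ hlp hln
    have hnl0 : n / ℓ ≠ 0 := by
      intro h
      have := Nat.div_mul_cancel hln
      rw [h, zero_mul] at this
      exact hn0 this.symm
    have hw : ∀ t : ℕ, ζ ^ (a γ * (t * (n / ℓ))) = (ζ ^ (a γ * (n / ℓ))) ^ t := by
      intro t
      rw [← pow_mul]
      ring_nf
    have hwl : (ζ ^ (a γ * (n / ℓ))) ^ ℓ = 1 := by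
      rw [← pow_mul, mul_assoc, Nat.div_mul_cancel hln, mul_comm, pow_mul, hζn, one_pow]
    have hgeom := aux_geom (ζ ^ (a γ * (n / ℓ))) ℓ hwl
    have hiff : (ζ ^ (a γ * (n / ℓ)) = 1) ↔ ℓ ∣ a γ := by
      rw [← orderOf_dvd_iff_pow_eq_one, hoζ]
      constructor
      · intro h
        have h2 : ℓ * (n / ℓ) ∣ a γ * (n / ℓ) := by
          rwa [Nat.mul_div_cancel' hln]
        exact (Nat.mul_dvd_mul_iff_left (Nat.pos_of_ne_zero hnl0)).mp
          (by rwa [mul_comm ℓ (n/ℓ), mul_comm (a γ) (n/ℓ)] at h2)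
      · intro h
        have : n ∣ a γ * (n / ℓ) := by
          obtain ⟨c, hc⟩ := h
          rw [hc, mul_assoc, mul_comm c (n/ℓ), ← mul_assoc, Nat.mul_div_cancel' hln]
          exact dvd_mul_right n c
        exact this
    rw [Finset.sum_congr rfl (fun t _ => hw t), hgeom]
    by_cases h : ℓ ∣ a γ
    · rw [if_pos (hiff.mpr h)]
      have hfalse : ¬ (∀ β : Fˣ, β ^ ℓ ≠ γ) := by
        push_neg
        exact (hpow_iff γ ℓ hlp hln).mpr h
      rw [if_neg hfalse]
      have hl0 : (ℓ:ℂ) ≠ 0 := Nat.cast_ne_zero.mpr hlp.pos.ne'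
      field_simp
      simp
    · rw [if_neg (fun hc => h (hiff.mp hc))]
      have htrue : ∀ β : Fˣ, β ^ ℓ ≠ γ := by
        intro β hβ
        exact h ((hpow_iff γ ℓ hlp hln).mp ⟨β, hβ⟩)
      rw [if_pos htrue]
      ring
  -- counting functions
  set N : Finset ℕ → ℕ := fun E => (T.filter (fun γ => ∀ ℓ ∈ E, ∀ β : Fˣ, β ^ ℓ ≠ γ)).card
    with hNdef
  set Φ : ℕ → ℂ := fun t₀ => ∑ γ ∈ T, ζ ^ (a γ * t₀) *
      ∏ ℓ ∈ P, (1 - (ℓ:ℂ)⁻¹ * ∑ t ∈ Finset.range ℓ, ζ ^ (a γ * (t * (n / ℓ)))) with hΦdef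
  set θ : ℝ := ∏ ℓ ∈ P, (1 - (ℓ:ℝ)⁻¹) with hθdef
  set W : ℝ := (2:ℝ) ^ P.card with hWdef
  have hu : ∀ (E : Finset ℕ), (∀ ℓ ∈ E, ℓ.Prime) → (∀ ℓ ∈ E, ℓ ∣ n) → ∀ γ : Fˣ,
      (∏ ℓ ∈ E, (1 - (ℓ:ℂ)⁻¹ * ∑ t ∈ Finset.range ℓ, ζ ^ (a γ * (t * (n / ℓ)))))
      = if (∀ ℓ ∈ E, ∀ β : Fˣ, β ^ ℓ ≠ γ) then 1 else 0 := by
    intro E hEp hEd γ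
    rw [Finset.prod_congr rfl (fun ℓ hl => hind γ ℓ (hEp ℓ hl) (hEd ℓ hl)), Finset.prod_boole]
  have hNu : ∀ (E : Finset ℕ), (∀ ℓ ∈ E, ℓ.Prime) → (∀ ℓ ∈ E, ℓ ∣ n) →
      ∑ γ ∈ T, (∏ ℓ ∈ E, (1 - (ℓ:ℂ)⁻¹ * ∑ t ∈ Finset.range ℓ, ζ ^ (a γ * (t * (n / ℓ)))))
      = ((N E : ℝ) : ℂ) := by
    intro E hEp hEd
    rw [Finset.sum_congr rfl (fun γ _ => hu E hEp hEd γ), Finset.sum_boole]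
    push_cast
    rfl
  -- E1 : main estimate at t₀ = 0
  have hAdm0 : ∀ S ⊆ P, ∀ τ : ℕ → ℕ, (∀ ℓ ∈ S, 1 ≤ τ ℓ ∧ τ ℓ < ℓ) → S.Nonempty →
      ¬ n ∣ (0 + ∑ ℓ ∈ S, τ ℓ * (n / ℓ)) := by
    intro S hS τ hτ hne
    rw [zero_add]
    exact aux_nt n hn0 S (fun ℓ hl => hPp ℓ (hS hl)) (fun ℓ hl => hPd ℓ (hS hl)) τ
      (fun ℓ hl => (hτ ℓ hl).1) (fun ℓ hl => (hτ ℓ hl).2) hne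
  have hE1 : |((N P : ℝ)) - θ * T.card| ≤ θ * (W - 1) * K := by
    have h0 := aux_est T a n hn0 ζ hoζ K hK' P hPp hPd 0 hAdm0
    rw [if_pos (dvd_zero n), if_pos (dvd_zero n)] at h0
    have hc : ∑ γ ∈ T, ζ ^ (a γ * 0) *
        ∏ ℓ ∈ P, (1 - (ℓ:ℂ)⁻¹ * ∑ t ∈ Finset.range ℓ, ζ ^ (a γ * (t * (n / ℓ))))
        = ((N P : ℝ) : ℂ) := by
      rw [← hNu P hPp hPd]
      exact Finset.sum_congr rfl fun γ _ => by rw [mul_zero, pow_zero, one_mul]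
    rw [hc, ← Complex.ofReal_sub, Complex.norm_real] at h0
    exact h0
  -- E2 : per-prime estimates
  have hΦbound : ∀ i : Fin s, ∀ t ∈ Finset.Ico 1 (p i), ‖Φ (t * (n / p i))‖ ≤ θ * W * K := by
    intro i t ht
    obtain ⟨ht1, ht2⟩ := Finset.mem_Ico.mp ht
    have hadm : ∀ S ⊆ P, ∀ τ : ℕ → ℕ, (∀ ℓ ∈ S, 1 ≤ τ ℓ ∧ τ ℓ < ℓ) → S.Nonempty →
        ¬ n ∣ (t * (n / p i) + ∑ ℓ ∈ S, τ ℓ * (n / ℓ)) := by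
      intro S hS τ hτ _
      have hpS : p i ∉ S := fun h => hpnotP i (hS h)
      have hnt := aux_nt n hn0 (insert (p i) S)
        (fun x hx => (Finset.mem_insert.mp hx).elim (fun h => h ▸ hp i) (fun h => hPp x (hS h)))
        (fun x hx => (Finset.mem_insert.mp hx).elim (fun h => h ▸ hpd i) (fun h => hPd x (hS h)))
        (fun x => if x = p i then t else τ x)
        (fun x hx => by
          rcases Finset.mem_insert.mp hx with h | h
          · subst h; simp only [if_pos rfl]; exact ht1
          · have hxp : ¬ x = p i := fun hc => hpS (hc ▸ h)
            simp only [if_neg hxp]; exact (hτ x h).1)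
        (fun x hx => by
          rcases Finset.mem_insert.mp hx with h | h
          · subst h; simp only [if_pos rfl]; exact ht2
          · have hxp : ¬ x = p i := fun hc => hpS (hc ▸ h)
            simp only [if_neg hxp]; exact (hτ x h).2)
        ⟨p i, Finset.mem_insert_self _ _⟩
      rw [Finset.sum_insert hpS] at hnt
      simp only [if_pos rfl] at hnt
      have hcong : ∑ x ∈ S, (if x = p i then t else τ x) * (n / x) = ∑ x ∈ S, τ x * (n / x) := by
        refine Finset.sum_congr rfl fun x hx => ?_
        have hxp : ¬ x = p i := fun hc => hpS (hc ▸ hx)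
        simp only [if_neg hxp]
      rwa [hcong] at hnt
    have hnd : ¬ n ∣ t * (n / p i) := by
      have hnt := aux_nt n hn0 {p i} (by simpa using hp i) (by simpa using hpd i)
        (fun _ => t) (by simpa using ht1) (by simpa using ht2) ⟨p i, by simp⟩
      simpa using hnt
    have h0 := aux_est T a n hn0 ζ hoζ K hK' P hPp hPd (t * (n / p i)) hadm
    rw [if_neg hnd, if_neg hnd, sub_zero, sub_zero] at h0
    exact h0
  -- identity for N (insert (p i) P)
  have hNins : ∀ i : Fin s, ((N (insert (p i) P) : ℝ) : ℂ)
      = (1 - ((p i : ℕ) : ℂ)⁻¹) * ((N P : ℝ) : ℂ)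
        - ((p i : ℕ) : ℂ)⁻¹ * ∑ t ∈ Finset.Ico 1 (p i), Φ (t * (n / p i)) := by
    intro i
    have hinsp : ∀ ℓ ∈ insert (p i) P, ℓ.Prime := fun x hx =>
      (Finset.mem_insert.mp hx).elim (fun h => h ▸ hp i) (fun h => hPp x h)
    have hinsd : ∀ ℓ ∈ insert (p i) P, ℓ ∣ n := fun x hx =>
      (Finset.mem_insert.mp hx).elim (fun h => h ▸ hpd i) (fun h => hPd x h)
    rw [← hNu _ hinsp hinsd]
    have hdec : ∀ γ : Fˣ,
        (1 - ((p i:ℕ):ℂ)⁻¹ * ∑ t ∈ Finset.range (p i), ζ ^ (a γ * (t * (n / p i))))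
        = (1 - ((p i:ℕ):ℂ)⁻¹)
          - ((p i:ℕ):ℂ)⁻¹ * ∑ t ∈ Finset.Ico 1 (p i), ζ ^ (a γ * (t * (n / p i))) := by
      intro γ
      have hsplit : ∑ t ∈ Finset.range (p i), ζ ^ (a γ * (t * (n / p i)))
          = 1 + ∑ t ∈ Finset.Ico 1 (p i), ζ ^ (a γ * (t * (n / p i))) := by
        rw [Finset.range_eq_Ico, Finset.sum_eq_sum_Ico_succ_bot (hp i).pos]
        simp
      rw [hsplit]; ring
    have hper : ∀ γ ∈ T,
        ∏ ℓ ∈ insert (p i) P, (1 - (ℓ:ℂ)⁻¹ * ∑ t ∈ Finset.range ℓ, ζ ^ (a γ * (t * (n / ℓ))))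
        = (1 - ((p i:ℕ):ℂ)⁻¹) *
            ∏ ℓ ∈ P, (1 - (ℓ:ℂ)⁻¹ * ∑ t ∈ Finset.range ℓ, ζ ^ (a γ * (t * (n / ℓ))))
          - ((p i:ℕ):ℂ)⁻¹ * ∑ t ∈ Finset.Ico 1 (p i), (ζ ^ (a γ * (t * (n / p i))) *
            ∏ ℓ ∈ P, (1 - (ℓ:ℂ)⁻¹ * ∑ t ∈ Finset.range ℓ, ζ ^ (a γ * (t * (n / ℓ))))) := by
      intro γ _
      rw [Finset.prod_insert (hpnotP i), hdec γ]
      have h1 : ∑ t ∈ Finset.Ico 1 (p i), (ζ ^ (a γ * (t * (n / p i))) *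
            ∏ ℓ ∈ P, (1 - (ℓ:ℂ)⁻¹ * ∑ t ∈ Finset.range ℓ, ζ ^ (a γ * (t * (n / ℓ)))))
          = (∑ t ∈ Finset.Ico 1 (p i), ζ ^ (a γ * (t * (n / p i)))) *
            ∏ ℓ ∈ P, (1 - (ℓ:ℂ)⁻¹ * ∑ t ∈ Finset.range ℓ, ζ ^ (a γ * (t * (n / ℓ)))) := by
        rw [Finset.sum_mul]
      rw [h1]; ring
    rw [Finset.sum_congr rfl hper, Finset.sum_sub_distrib, ← Finset.mul_sum, ← Finset.mul_sum,
      Finset.sum_comm, hNu P hPp hPd]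
  -- real per-prime lower bound
  have hθpnn : ∀ i : Fin s, (0:ℝ) ≤ 1 - (p i:ℝ)⁻¹ := by
    intro i
    have h2 : (2:ℝ) ≤ (p i : ℝ) := by exact_mod_cast (hp i).two_le
    have : (p i:ℝ)⁻¹ ≤ 1 := by rw [inv_le_one_iff₀]; right; linarith
    linarith
  have hE2 : ∀ i : Fin s, (1 - (p i:ℝ)⁻¹) * (N P : ℝ) - (1 - (p i:ℝ)⁻¹) * (θ * W * K)
      ≤ ((N (insert (p i) P) : ℝ)) := by
    intro i
    have hpinv_nn : (0:ℝ) ≤ ((p i : ℕ):ℝ)⁻¹ := by positivity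
    have hdiff : ‖((N (insert (p i) P) : ℝ) : ℂ) - (1 - ((p i:ℕ):ℂ)⁻¹) * ((N P : ℝ):ℂ)‖
        ≤ (1 - (p i:ℝ)⁻¹) * (θ * W * K) := by
      rw [hNins i]
      have heq : (1 - ((p i:ℕ):ℂ)⁻¹) * ((N P : ℝ):ℂ)
            - ((p i:ℕ):ℂ)⁻¹ * ∑ t ∈ Finset.Ico 1 (p i), Φ (t * (n / p i))
            - (1 - ((p i:ℕ):ℂ)⁻¹) * ((N P : ℝ):ℂ)
          = -(((p i:ℕ):ℂ)⁻¹ * ∑ t ∈ Finset.Ico 1 (p i), Φ (t * (n / p i))) := by ring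
      rw [heq, norm_neg]
      have hc2 : (((p i:ℕ):ℂ)⁻¹) = ((((p i:ℕ):ℝ)⁻¹ : ℝ) : ℂ) := by push_cast; ring
      rw [hc2, norm_mul, Complex.norm_real, Real.norm_of_nonneg hpinv_nn]
      have hsum : ‖∑ t ∈ Finset.Ico 1 (p i), Φ (t * (n / p i))‖
          ≤ ((p i:ℝ) - 1) * (θ * W * K) := by
        refine (norm_sum_le _ _).trans ?_
        have h1 := Finset.sum_le_sum (hΦbound i)
        rw [Finset.sum_const, Nat.card_Ico, nsmul_eq_mul] at h1
        have hc3 : ((p i - 1 : ℕ) : ℝ) = (p i:ℝ) - 1 := by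
          push_cast [Nat.cast_sub (hp i).one_lt.le]; ring
        rw [hc3] at h1
        exact h1
      have hple : ((p i:ℕ):ℝ)⁻¹ * ‖∑ t ∈ Finset.Ico 1 (p i), Φ (t * (n / p i))‖
          ≤ ((p i:ℕ):ℝ)⁻¹ * (((p i:ℝ) - 1) * (θ * W * K)) :=
        mul_le_mul_of_nonneg_left hsum hpinv_nn
      refine hple.trans (le_of_eq ?_)
      have hpne : ((p i):ℝ) ≠ 0 := by exact_mod_cast (hp i).pos.ne'
      field_simp
    have hc : ((N (insert (p i) P) : ℝ) : ℂ) - (1 - ((p i:ℕ):ℂ)⁻¹) * ((N P : ℝ):ℂ)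
        = ((((N (insert (p i) P) : ℝ)) - (1 - (p i:ℝ)⁻¹) * (N P : ℝ) : ℝ) : ℂ) := by
      push_cast; ring
    rw [hc, Complex.norm_real] at hdiff
    have := (abs_le.mp hdiff).1
    linarith
  -- sieve counting inequality
  set Q : Finset ℕ := Finset.image p Finset.univ with hQdef
  have hsieve : (∑ i : Fin s, ((N (insert (p i) P)) : ℝ))
      ≤ ((s:ℝ) - 1) * (N P : ℝ) + (N (P ∪ Q) : ℝ) := by
    have hfil : ∀ i : Fin s,
        T.filter (fun γ => ∀ ℓ ∈ insert (p i) P, ∀ β : Fˣ, β ^ ℓ ≠ γ)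
        = (T.filter (fun γ => ∀ ℓ ∈ P, ∀ β : Fˣ, β ^ ℓ ≠ γ)).filter
            (fun γ => ∀ β : Fˣ, β ^ (p i) ≠ γ) := by
      intro i
      rw [Finset.filter_filter]
      refine Finset.filter_congr fun γ _ => ?_
      rw [Finset.forall_mem_insert]
      exact ⟨fun h => ⟨h.2, h.1⟩, fun h => ⟨h.2, h.1⟩⟩
    have hcard : ∀ i : Fin s, ((N (insert (p i) P)) : ℝ)
        = ∑ γ ∈ T.filter (fun γ => ∀ ℓ ∈ P, ∀ β : Fˣ, β ^ ℓ ≠ γ),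
            (if (∀ β : Fˣ, β ^ (p i) ≠ γ) then (1:ℝ) else 0) := by
      intro i
      rw [Finset.sum_boole, hNdef]
      simp only [hfil i]
    rw [Finset.sum_congr rfl (fun i _ => hcard i), Finset.sum_comm]
    have hpoint : ∀ γ ∈ T.filter (fun γ => ∀ ℓ ∈ P, ∀ β : Fˣ, β ^ ℓ ≠ γ),
        (∑ i : Fin s, if (∀ β : Fˣ, β ^ (p i) ≠ γ) then (1:ℝ) else 0)
        ≤ ((s:ℝ) - 1) + (if (∀ ℓ ∈ P ∪ Q, ∀ β : Fˣ, β ^ ℓ ≠ γ) then (1:ℝ) else 0) := by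
      intro γ hγ
      have hγP : ∀ ℓ ∈ P, ∀ β : Fˣ, β ^ ℓ ≠ γ := (Finset.mem_filter.mp hγ).2
      by_cases hall : ∀ ℓ ∈ P ∪ Q, ∀ β : Fˣ, β ^ ℓ ≠ γ
      · rw [if_pos hall]
        have hone : ∀ i : Fin s, (if (∀ β : Fˣ, β ^ (p i) ≠ γ) then (1:ℝ) else 0) ≤ 1 := by
          intro i; split_ifs <;> norm_num
        calc (∑ i : Fin s, if (∀ β : Fˣ, β ^ (p i) ≠ γ) then (1:ℝ) else 0)
            ≤ ∑ _i : Fin s, (1:ℝ) := Finset.sum_le_sum fun i _ => hone i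
          _ = (s:ℝ) := by rw [Finset.sum_const, Finset.card_univ, Fintype.card_fin, nsmul_eq_mul, mul_one]
          _ ≤ ((s:ℝ) - 1) + 1 := by linarith
      · rw [if_neg hall]
        push_neg at hall
        obtain ⟨ℓ, hℓPQ, β, hβ⟩ := hall
        rcases Finset.mem_union.mp hℓPQ with h | h
        · exact absurd hβ (hγP ℓ h β)
        · obtain ⟨j, _, hj⟩ := Finset.mem_image.mp h
          have hj0 : ¬ (∀ β : Fˣ, β ^ (p j) ≠ γ) := by
            push_neg; exact ⟨β, by rwa [hj]⟩
          rw [← Finset.add_sum_erase _ _ (Finset.mem_univ j), if_neg hj0, zero_add]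
          have hone : ∀ i ∈ Finset.univ.erase j,
              (if (∀ β : Fˣ, β ^ (p i) ≠ γ) then (1:ℝ) else 0) ≤ 1 := by
            intro i _; split_ifs <;> norm_num
          calc (∑ i ∈ Finset.univ.erase j, if (∀ β : Fˣ, β ^ (p i) ≠ γ) then (1:ℝ) else 0)
              ≤ ∑ _i ∈ Finset.univ.erase j, (1:ℝ) := Finset.sum_le_sum hone
            _ = ((Finset.univ.erase j).card : ℝ) := by rw [Finset.sum_const, nsmul_eq_mul, mul_one]
            _ = ((s:ℝ) - 1) := by
                rw [Finset.card_erase_of_mem (Finset.mem_univ j), Finset.card_univ,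
                  Fintype.card_fin]
                have hs1 : 1 ≤ s := Fin.pos j
                push_cast [Nat.cast_sub hs1]
                ring
            _ ≤ ((s:ℝ) - 1) + 0 := by linarith
    refine (Finset.sum_le_sum hpoint).trans ?_
    rw [Finset.sum_add_distrib, Finset.sum_const, nsmul_eq_mul, mul_comm]
    have hlast : ∑ γ ∈ T.filter (fun γ => ∀ ℓ ∈ P, ∀ β : Fˣ, β ^ ℓ ≠ γ),
        (if (∀ ℓ ∈ P ∪ Q, ∀ β : Fˣ, β ^ ℓ ≠ γ) then (1:ℝ) else 0) = (N (P ∪ Q) : ℝ) := by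
      rw [Finset.sum_boole, Finset.filter_filter, hNdef]
      congr 1
      norm_cast
      congr 1
      refine Finset.filter_congr fun γ _ => ?_
      constructor
      · exact fun h => h.2
      · intro h
        exact ⟨fun ℓ hl => h ℓ (Finset.mem_union_left _ hl), h⟩
    rw [hlast]
  -- assemble the estimates
  have hθpos : (0:ℝ) < θ := by
    rw [hθdef]
    refine Finset.prod_pos fun ℓ hl => ?_
    have h2 : (2:ℝ) ≤ (ℓ:ℝ) := by exact_mod_cast (hPp ℓ hl).two_le
    have hlt : (ℓ:ℝ)⁻¹ < 1 := by rw [inv_lt_one_iff₀]; right; linarith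
    linarith
  have hsumθ : ∑ i : Fin s, (1 - (p i:ℝ)⁻¹) = (s:ℝ) - 1 + δ := by
    rw [Finset.sum_sub_distrib, Finset.sum_const, Finset.card_univ, Fintype.card_fin,
      nsmul_eq_mul, mul_one, hδ]
    simp only [one_div]
    ring
  have hsum2 := Finset.sum_le_sum (fun i (_ : i ∈ Finset.univ) => hE2 i)
  rw [Finset.sum_sub_distrib, ← Finset.sum_mul, ← Finset.sum_mul, hsumθ] at hsum2
  have hNPlb : θ * T.card - θ * (W - 1) * K ≤ (N P : ℝ) := by
    have := (abs_le.mp hE1).1; linarith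
  have hδT : (W * ((s:ℝ) + 2*δ - 1) - δ) * K < δ * (T.card:ℝ) := by
    rw [hTcard] at hA
    have h1 := (mul_lt_mul_iff_right₀ hδpos).mpr hA
    calc (W * ((s:ℝ) + 2*δ - 1) - δ) * K
        = δ * ((W * ((s:ℝ) + 2*δ - 1) - δ)/δ * K) := by field_simp
      _ < δ * (T.card:ℝ) := h1
  have hδNP : δ * (θ * T.card - θ * (W - 1) * K) ≤ δ * (N P : ℝ) :=
    mul_le_mul_of_nonneg_left hNPlb hδpos.le
  have h3 : (((s:ℝ)-1)+δ) * (N P:ℝ) - (((s:ℝ)-1)+δ) * (θ*W*K)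
      ≤ ((s:ℝ)-1)*(N P:ℝ) + (N (P ∪ Q):ℝ) := le_trans hsum2 hsieve
  have h4 : δ * (N P:ℝ) - (((s:ℝ)-1)+δ) * (θ*W*K) ≤ (N (P ∪ Q):ℝ) := by nlinarith [h3]
  have hkey1 : (0:ℝ) < θ * (δ * T.card - (W * ((s:ℝ) + 2*δ - 1) - δ) * K) :=
    mul_pos hθpos (by linarith)
  have hc : θ * (δ * T.card - (W * ((s:ℝ) + 2*δ - 1) - δ) * K)
      = δ * (θ * T.card - θ * (W - 1) * K) - (((s:ℝ)-1)+δ) * (θ * W * K) := by ring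
  have hNrad : (0:ℝ) < (N (P ∪ Q) : ℝ) := by linarith
  -- extract a primitive element
  have hNpos : 0 < N (P ∪ Q) := by exact_mod_cast hNrad
  have hne2 : (T.filter (fun γ => ∀ ℓ ∈ P ∪ Q, ∀ β : Fˣ, β ^ ℓ ≠ γ)).Nonempty := by
    rw [hNdef] at hNpos
    exact Finset.card_pos.mp hNpos
  obtain ⟨γ, hγ⟩ := hne2
  obtain ⟨hγT, hγfree⟩ := Finset.mem_filter.mp hγ
  refine ⟨γ, Set.mem_toFinset.mp hγT, ?_⟩
  have hnog : ∀ ℓ : ℕ, ℓ.Prime → ℓ ∣ n → ¬ ℓ ∣ a γ := by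
    intro ℓ hlp hln hla
    have hmem : ℓ ∈ P ∪ Q := by
      have hlrad : ℓ ∣ radical n :=
        Finset.dvd_prod_of_mem id (Nat.mem_primeFactors.mpr ⟨hlp, hln, hn0⟩)
      rw [hrad] at hlrad
      rcases (Nat.Prime.dvd_mul hlp).mp hlrad with h | h
      · exact Finset.mem_union_left _ (Nat.mem_primeFactors.mpr ⟨hlp, h, hk0⟩)
      · obtain ⟨j, _, hj⟩ := hlp.prime.exists_mem_finset_dvd h
        have hje : ℓ = p j := (Nat.prime_dvd_prime_iff_eq hlp (hp j)).mp hj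
        exact Finset.mem_union_right _ (Finset.mem_image.mpr ⟨j, Finset.mem_univ j, hje.symm⟩)
    obtain ⟨β, hβ⟩ := (hpow_iff γ ℓ hlp hln).mpr hla
    exact hγfree ℓ hmem β hβ
  have hgcd : Nat.gcd n (a γ) = 1 := by
    by_contra h
    obtain ⟨ℓ, hlp, hld⟩ := Nat.exists_prime_and_dvd h
    exact hnog ℓ hlp (hld.trans (Nat.gcd_dvd_left _ _)) (hld.trans (Nat.gcd_dvd_right _ _))
  have hordγ : orderOf γ = n := by
    rw [← ha γ, orderOf_pow, hog, hgcd, Nat.div_one]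
  apply Subgroup.eq_top_of_card_eq
  rw [Nat.card_zpowers, hordγ, Nat.card_eq_fintype_card, hcardF]
end
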